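/- arXiv:0810.5000 — 4 statements merged into one kernel-verified Lean document; each statement's English description precedes it below -/
import Mathlib

section
/- Let k, γ_p (p=1,…,ℓ-1) be complex numbers, ε a primitive ℓ-th root of unity, and for each i∈{1,…,n} define the connection operator ∇'_i = ∂_{x_i} + k·Σ_{j≠i} Σ_{p=1}^{ℓ} 1/(x_i − ε^{−p} x_j) + Σ_{p=1}^{ℓ−1} γ_p/(x_i − ε^{−p} x_i), acting on rational functions in x_1,…,x_n regular away from the hyperplanes x_i = ε^p x_j (i≠j) and x_i = 0. Then for all i ≠ j the operators commute: [∇'_i, ∇'_j] = 0. -/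
/-- The operator `∇'_i = ∂_{x_i} + k Σ_{j≠i} Σ_{p=1}^{ℓ} 1/(x_i - ε^{-p} x_j)
+ Σ_{p=1}^{ℓ-1} γ_p/(x_i - ε^{-p} x_i)` acting on functions on `ℂ^n`. -/
noncomputable def nablaP (n ℓ : ℕ) (ε k : ℂ) (γ : ℕ → ℂ) (i : Fin n)
    (f : (Fin n → ℂ) → ℂ) : (Fin n → ℂ) → ℂ := fun x =>
  fderiv ℂ f x (Pi.single i 1) +
    (k * ∑ j ∈ Finset.univ.erase i, ∑ p ∈ Finset.range ℓ,
        (x i - ε⁻¹ ^ (p + 1) * x j)⁻¹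
      + ∑ p ∈ Finset.Ico 1 ℓ, γ p * (x i - ε⁻¹ ^ p * x i)⁻¹) * f x

open Finset ContinuousLinearMap

/-- Multiplier part of `nablaP`. -/
noncomputable def Af (n ℓ : ℕ) (ε k : ℂ) (γ : ℕ → ℂ) (i : Fin n) (x : Fin n → ℂ) : ℂ :=
  k * ∑ j ∈ Finset.univ.erase i, ∑ p ∈ Finset.range ℓ, (x i - ε⁻¹ ^ (p + 1) * x j)⁻¹
    + ∑ p ∈ Finset.Ico 1 ℓ, γ p * (x i - ε⁻¹ ^ p * x i)⁻¹

/-- Linear form `y ↦ y i - c * y j`. -/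
noncomputable def Lm (n : ℕ) (c : ℂ) (i j : Fin n) : (Fin n → ℂ) →L[ℂ] ℂ :=
  ContinuousLinearMap.proj i - c • ContinuousLinearMap.proj j

@[simp] lemma Lm_apply (n : ℕ) (c : ℂ) (i j : Fin n) (y : Fin n → ℂ) :
    Lm n c i j y = y i - c * y j := by
  simp [Lm]

/-- Derivative of `y ↦ (y i - c * y j)⁻¹` at `x`. -/
noncomputable def Dterm (n : ℕ) (c : ℂ) (i j : Fin n) (x : Fin n → ℂ) :
    (Fin n → ℂ) →L[ℂ] ℂ :=
  (ContinuousLinearMap.smulRight (1 : ℂ →L[ℂ] ℂ) (-((x i - c * x j) ^ 2)⁻¹)).comp (Lm n c i j)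

@[simp] lemma Dterm_apply (n : ℕ) (c : ℂ) (i j : Fin n) (x y : Fin n → ℂ) :
    Dterm n c i j x y = (y i - c * y j) * -((x i - c * x j) ^ 2)⁻¹ := by
  simp [Dterm, smul_eq_mul]

lemma hasFDerivAt_invterm (n : ℕ) (c : ℂ) (i j : Fin n) (x : Fin n → ℂ)
    (h : x i - c * x j ≠ 0) :
    HasFDerivAt (fun y => (y i - c * y j)⁻¹) (Dterm n c i j x) x := by
  have hcoe : ⇑(Lm n c i j) = fun y : Fin n → ℂ => y i - c * y j := by
    funext y; simp
  have hL : HasFDerivAt (fun y : Fin n → ℂ => y i - c * y j) (Lm n c i j) x := by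
    rw [← hcoe]; exact (Lm n c i j).hasFDerivAt
  have := (hasFDerivAt_inv h).comp x hL
  exact this

open Finset ContinuousLinearMap

noncomputable def Bf (n ℓ : ℕ) (ε k : ℂ) (γ : ℕ → ℂ) (i : Fin n) (x : Fin n → ℂ) :
    (Fin n → ℂ) →L[ℂ] ℂ :=
  k • (∑ j ∈ Finset.univ.erase i, ∑ p ∈ Finset.range ℓ, Dterm n (ε⁻¹ ^ (p + 1)) i j x)
    + ∑ p ∈ Finset.Ico 1 ℓ, γ p • Dterm n (ε⁻¹ ^ p) i i x

lemma Bf_apply_single (n ℓ : ℕ) (ε k : ℂ) (γ : ℕ → ℂ) (i j : Fin n) (hij : i ≠ j)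
    (x : Fin n → ℂ) :
    Bf n ℓ ε k γ j x (Pi.single i 1)
      = k * ∑ p ∈ Finset.range ℓ, ε⁻¹ ^ (p + 1) * ((x j - ε⁻¹ ^ (p + 1) * x i) ^ 2)⁻¹ := by
  have hji : Pi.single (M := fun _ : Fin n => ℂ) i 1 j = 0 := by
    simp [Pi.single_eq_of_ne (Ne.symm hij)]
  simp only [Bf, ContinuousLinearMap.add_apply, ContinuousLinearMap.smul_apply,
    ContinuousLinearMap.sum_apply, Dterm_apply, hji, smul_eq_mul]
  rw [Finset.sum_eq_single_of_mem i (Finset.mem_erase.2 ⟨hij, Finset.mem_univ i⟩)]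
  · rw [show ∑ q ∈ Finset.Ico 1 ℓ, γ q * ((0 - ε⁻¹ ^ q * 0) * -((x j - ε⁻¹ ^ q * x j) ^ 2)⁻¹)
        = 0 from Finset.sum_eq_zero fun q _ => by ring, add_zero]
    simp only [Pi.single_eq_same]
    congr 1
    exact Finset.sum_congr rfl fun p _ => by ring
  · intro m hm hmi
    have h0 : Pi.single (M := fun _ : Fin n => ℂ) i 1 m = 0 := by
      simp [Pi.single_eq_of_ne hmi]
    simp [h0]

lemma key_flip (c : ℂ) (hc : c ≠ 0) (u v : ℂ) :
    c⁻¹ * ((u - c⁻¹ * v) ^ 2)⁻¹ = c * ((v - c * u) ^ 2)⁻¹ := by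
  have h2 : (u - c⁻¹ * v) ^ 2 = (c⁻¹) ^ 2 * (v - c * u) ^ 2 := by
    field_simp
    ring
  rw [h2, mul_inv, inv_pow, inv_inv, ← mul_assoc]
  congr 1
  field_simp [sq]

lemma key_sum (ℓ : ℕ) (hℓ : 0 < ℓ) (ε : ℂ) (hε0 : ε ≠ 0) (hε1 : ε ^ ℓ = 1) (a b : ℂ) :
    ∑ p ∈ Finset.range ℓ, ε⁻¹ ^ (p + 1) * ((a - ε⁻¹ ^ (p + 1) * b) ^ 2)⁻¹
      = ∑ p ∈ Finset.range ℓ, ε⁻¹ ^ (p + 1) * ((b - ε⁻¹ ^ (p + 1) * a) ^ 2)⁻¹ := by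
  have hσmem : ∀ p ∈ Finset.range ℓ, ℓ - 1 - (p + 1) % ℓ ∈ Finset.range ℓ := by
    intro p hp; simp only [Finset.mem_range] at *; omega
  have hσσ : ∀ p ∈ Finset.range ℓ, ℓ - 1 - ((ℓ - 1 - (p + 1) % ℓ) + 1) % ℓ = p := by
    intro p hp; simp only [Finset.mem_range] at hp
    rcases Nat.lt_or_ge (p + 1) ℓ with h | h
    · rw [Nat.mod_eq_of_lt h, Nat.mod_eq_of_lt (show ℓ - 1 - (p + 1) + 1 < ℓ by omega)]
      omega
    · have hpl : p + 1 = ℓ := by omega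
      rw [hpl, Nat.mod_self, Nat.sub_zero, show ℓ - 1 + 1 = ℓ by omega, Nat.mod_self]
      omega
  refine Finset.sum_nbij' (i := fun p => ℓ - 1 - (p + 1) % ℓ)
    (j := fun p => ℓ - 1 - (p + 1) % ℓ) hσmem hσmem hσσ hσσ ?_
  intro p hp
  simp only [Finset.mem_range] at hp
  -- goal : ε⁻¹^(p+1) * ((a - ε⁻¹^(p+1) b)^2)⁻¹ = ε⁻¹^(σ p + 1) * ((b - ε⁻¹^(σ p+1) a)^2)⁻¹
  set q : ℕ := ℓ - 1 - (p + 1) % ℓ with hq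
  have hpow : (ε⁻¹ ^ (q + 1)) = (ε⁻¹ ^ (p + 1))⁻¹ := by
    have hdvd : (p + 1) + (q + 1) = ℓ ∨ (p + 1) + (q + 1) = 2 * ℓ := by
      rcases Nat.lt_or_ge (p + 1) ℓ with h | h
      · left; have : (p+1) % ℓ = p+1 := Nat.mod_eq_of_lt h; omega
      · right
        have hpl : p + 1 = ℓ := by omega
        have : (p+1) % ℓ = 0 := by rw [hpl]; exact Nat.mod_self ℓ
        omega
    have h1 : ε ^ ((p + 1) + (q + 1)) = 1 := by
      rcases hdvd with h | h
      · rw [h, hε1]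
      · rw [h, pow_mul', hε1, one_pow]
    rw [pow_add] at h1
    have h2 : ε ^ (q + 1) = (ε ^ (p + 1))⁻¹ := by
      field_simp at h1 ⊢
      linear_combination h1
    rw [inv_pow, inv_pow, h2]
  rw [hpow]
  exact (key_flip (ε⁻¹ ^ (p + 1)) (pow_ne_zero _ (inv_ne_zero hε0)) b a).symm

lemma hasFDerivAt_Af (n ℓ : ℕ) (ε k : ℂ) (γ : ℕ → ℂ) (i : Fin n) (x : Fin n → ℂ)
    (h1 : ∀ j : Fin n, j ≠ i → ∀ p : ℕ, x i - ε⁻¹ ^ p * x j ≠ 0)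
    (h2 : ∀ p ∈ Finset.Ico 1 ℓ, x i - ε⁻¹ ^ p * x i ≠ 0) :
    HasFDerivAt (Af n ℓ ε k γ i) (Bf n ℓ ε k γ i x) x := by
  have hfirst : HasFDerivAt
      (fun y : Fin n → ℂ => k * ∑ j ∈ Finset.univ.erase i, ∑ p ∈ Finset.range ℓ,
        (y i - ε⁻¹ ^ (p + 1) * y j)⁻¹)
      (k • ∑ j ∈ Finset.univ.erase i, ∑ p ∈ Finset.range ℓ, Dterm n (ε⁻¹ ^ (p + 1)) i j x) x :=
    HasFDerivAt.const_mul
      (HasFDerivAt.fun_sum fun j hj => HasFDerivAt.fun_sum fun p _ =>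
        hasFDerivAt_invterm n (ε⁻¹ ^ (p + 1)) i j x
          (h1 j (Finset.ne_of_mem_erase hj) (p + 1))) k
  have hsecond : HasFDerivAt
      (fun y : Fin n → ℂ => ∑ p ∈ Finset.Ico 1 ℓ, γ p * (y i - ε⁻¹ ^ p * y i)⁻¹)
      (∑ p ∈ Finset.Ico 1 ℓ, γ p • Dterm n (ε⁻¹ ^ p) i i x) x :=
    HasFDerivAt.fun_sum fun p hp =>
      HasFDerivAt.const_mul (hasFDerivAt_invterm n (ε⁻¹ ^ p) i i x (h2 p hp)) (γ p)
  exact hfirst.add hsecond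

/-- For `ε` a primitive `ℓ`-th root of unity and parameters `k, γ_p ∈ ℂ`, the
operators `∇'_i` commute on functions regular (here: twice continuously
differentiable) away from the hyperplanes `x_i = ε^p x_j` (`i ≠ j`) and
`x_i = 0`: `[∇'_i, ∇'_j] = 0` for `i ≠ j`. -/
theorem stmt_0 (n ℓ : ℕ) (hn : 0 < n) (hℓ : 0 < ℓ)
    (ε : ℂ) (hε : IsPrimitiveRoot ε ℓ) (k : ℂ) (γ : ℕ → ℂ)
    (U : Set (Fin n → ℂ))
    (hU : U = {x | (∀ i, x i ≠ 0) ∧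
      ∀ i j : Fin n, i ≠ j → ∀ p : ℕ, x i ≠ ε ^ p * x j})
    (f : (Fin n → ℂ) → ℂ) (hf : ContDiffOn ℂ 2 f U) :
    ∀ i j : Fin n, i ≠ j → ∀ x ∈ U,
      nablaP n ℓ ε k γ i (nablaP n ℓ ε k γ j f) x
        = nablaP n ℓ ε k γ j (nablaP n ℓ ε k γ i f) x := by
  subst hU
  have hεℓ : ε ^ ℓ = 1 := hε.pow_eq_one
  have hε0 : ε ≠ 0 := by
    intro h
    rw [h, zero_pow hℓ.ne'] at hεℓ
    exact zero_ne_one hεℓ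
  have hmod : ∀ p : ℕ, ε ^ p = ε ^ (p % ℓ) := by
    intro p
    conv_lhs => rw [← Nat.div_add_mod p ℓ]
    rw [pow_add, pow_mul, hεℓ, one_pow, one_mul]
  have hUopen : IsOpen {x : Fin n → ℂ | (∀ i, x i ≠ 0) ∧
      ∀ i j : Fin n, i ≠ j → ∀ p : ℕ, x i ≠ ε ^ p * x j} := by
    have heq : {x : Fin n → ℂ | (∀ i, x i ≠ 0) ∧
        ∀ i j : Fin n, i ≠ j → ∀ p : ℕ, x i ≠ ε ^ p * x j}
        = (⋂ i : Fin n, {x : Fin n → ℂ | x i ≠ 0}) ∩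
          ⋂ (i : Fin n) (j : Fin n) (p : Fin ℓ),
            {x : Fin n → ℂ | i ≠ j → x i ≠ ε ^ (p : ℕ) * x j} := by
      ext x
      simp only [Set.mem_setOf_eq, Set.mem_inter_iff, Set.mem_iInter]
      constructor
      · rintro ⟨ha, hb⟩
        exact ⟨fun i => ha i, fun i j p hij => hb i j hij p⟩
      · rintro ⟨ha, hb⟩
        refine ⟨ha, fun i j hij p => ?_⟩
        rw [hmod p]
        exact hb i j ⟨p % ℓ, Nat.mod_lt _ hℓ⟩ hij
    rw [heq]
    refine IsOpen.inter (isOpen_iInter_of_finite fun i => ?_)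
      (isOpen_iInter_of_finite fun i => isOpen_iInter_of_finite fun j =>
        isOpen_iInter_of_finite fun p => ?_)
    · exact isOpen_ne.preimage (continuous_apply i)
    · by_cases hij : i = j
      · have : {x : Fin n → ℂ | i ≠ j → x i ≠ ε ^ (p : ℕ) * x j} = Set.univ := by
          ext y; simp [hij]
        rw [this]; exact isOpen_univ
      · have : {x : Fin n → ℂ | i ≠ j → x i ≠ ε ^ (p : ℕ) * x j}
            = {x : Fin n → ℂ | x i ≠ ε ^ (p : ℕ) * x j} := by
          ext y; simp [hij]
        rw [this]
        exact isOpen_ne_fun (continuous_apply i) (continuous_const.mul (continuous_apply j))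
  intro i j hij x hx
  obtain ⟨hx0, hxne⟩ := hx
  have hinv_pow : ∀ p : ℕ, (ε⁻¹ : ℂ) ^ p = ε ^ ((ℓ - 1) * p) := by
    intro p
    have h1 : ε ^ (ℓ - 1) * ε = 1 := by
      rw [← pow_succ, Nat.sub_add_cancel hℓ, hεℓ]
    have hinv : ε⁻¹ = ε ^ (ℓ - 1) := (eq_inv_of_mul_eq_one_left h1).symm
    rw [hinv, ← pow_mul]
  have hden1 : ∀ a b : Fin n, a ≠ b → ∀ p : ℕ, x a - ε⁻¹ ^ p * x b ≠ 0 := by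
    intro a b hab p
    rw [hinv_pow p]
    exact sub_ne_zero.mpr (hxne a b hab _)
  have hden2 : ∀ a : Fin n, ∀ p ∈ Finset.Ico 1 ℓ, x a - ε⁻¹ ^ p * x a ≠ 0 := by
    intro a p hp
    simp only [Finset.mem_Ico] at hp
    have hne1 : (ε⁻¹ : ℂ) ^ p ≠ 1 := by
      rw [inv_pow, ne_eq, inv_eq_one]
      exact hε.pow_ne_one_of_pos_of_lt (by omega) hp.2
    have hstep : x a - ε⁻¹ ^ p * x a = (1 - ε⁻¹ ^ p) * x a := by ring
    rw [hstep]
    exact mul_ne_zero (sub_ne_zero.mpr (Ne.symm hne1)) (hx0 a)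
  have hUx : {x : Fin n → ℂ | (∀ i, x i ≠ 0) ∧
      ∀ i j : Fin n, i ≠ j → ∀ p : ℕ, x i ≠ ε ^ p * x j} ∈ nhds x :=
    hUopen.mem_nhds ⟨hx0, hxne⟩
  have hfx : ContDiffAt ℂ 2 f x := hf.contDiffAt hUx
  have hdf : DifferentiableAt ℂ f x := hfx.differentiableAt (by norm_num)
  have hdF : DifferentiableAt ℂ (fderiv ℂ f) x :=
    (hfx.fderiv_right (m := 1) (by norm_num)).differentiableAt one_ne_zero
  have hsymm : IsSymmSndFDerivAt ℂ f x := hfx.isSymmSndFDerivAt (by simp [minSmoothness_of_isRCLikeNormedField])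
  have hval : ∀ m : Fin n, HasFDerivAt (fun y => fderiv ℂ f y (Pi.single m 1))
      ((ContinuousLinearMap.apply ℂ ℂ (Pi.single m (1 : ℂ))).comp
        (fderiv ℂ (fderiv ℂ f) x)) x := by
    intro m
    have h := ((ContinuousLinearMap.apply ℂ ℂ (Pi.single m (1 : ℂ))).hasFDerivAt
      (x := fderiv ℂ f x)).comp x hdF.hasFDerivAt
    exact h
  have hAf : ∀ m : Fin n, HasFDerivAt (Af n ℓ ε k γ m) (Bf n ℓ ε k γ m x) x := fun m =>
    hasFDerivAt_Af n ℓ ε k γ m x (fun j' hj' p => hden1 m j' (Ne.symm hj') p) (hden2 m)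
  have hNab : ∀ m : Fin n, HasFDerivAt (nablaP n ℓ ε k γ m f)
      ((ContinuousLinearMap.apply ℂ ℂ (Pi.single m (1 : ℂ))).comp (fderiv ℂ (fderiv ℂ f) x)
        + (Af n ℓ ε k γ m x • fderiv ℂ f x + f x • Bf n ℓ ε k γ m x)) x := fun m =>
    (hval m).add ((hAf m).mul hdf.hasFDerivAt)
  have expand : ∀ a b : Fin n, nablaP n ℓ ε k γ a (nablaP n ℓ ε k γ b f) x
      = fderiv ℂ (fderiv ℂ f) x (Pi.single a 1) (Pi.single b 1)
        + Af n ℓ ε k γ b x * fderiv ℂ f x (Pi.single a 1)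
        + f x * Bf n ℓ ε k γ b x (Pi.single a 1)
        + Af n ℓ ε k γ a x * fderiv ℂ f x (Pi.single b 1)
        + Af n ℓ ε k γ a x * (Af n ℓ ε k γ b x * f x) := by
    intro a b
    show fderiv ℂ (nablaP n ℓ ε k γ b f) x (Pi.single a 1)
      + Af n ℓ ε k γ a x * (nablaP n ℓ ε k γ b f x) = _
    rw [(hNab b).fderiv]
    show _ + Af n ℓ ε k γ a x * (fderiv ℂ f x (Pi.single b 1) + Af n ℓ ε k γ b x * f x) = _
    simp only [ContinuousLinearMap.add_apply, ContinuousLinearMap.comp_apply,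
      ContinuousLinearMap.apply_apply, ContinuousLinearMap.smul_apply, smul_eq_mul]
    ring
  have hBsym : Bf n ℓ ε k γ j x (Pi.single i 1) = Bf n ℓ ε k γ i x (Pi.single j 1) := by
    rw [Bf_apply_single n ℓ ε k γ i j hij x, Bf_apply_single n ℓ ε k γ j i (Ne.symm hij) x]
    congr 1
    exact key_sum ℓ hℓ ε hε0 hεℓ (x j) (x i)
  rw [expand i j, expand j i, hsymm (Pi.single i 1) (Pi.single j 1), hBsym]
  ring
end

section
/- Let φ: 𝒜 → ℬ be a functor between Artinian abelian ℂ-linear categories and P a projective generator of 𝒜 with Q = φ(P). Assume: (a) Q is a projective generator of ℬ; (b) φ is fully faithful on the full subcategory of projective objects of 𝒜; (c) every object of 𝒜 has finite projective dimension; (d) φ is right exact. Then φ is an equivalence of categories. -/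
open CategoryTheory CategoryTheory.Limits ZeroObject

namespace Stmt8Aux

variable {C : Type*} [Category C] [Abelian C]

/-- Finite "copowers" of `P`: closure of `{P, 0}` under binary biproducts and isomorphism. -/
inductive Copow (P : C) : C → Prop
  | self : Copow P P
  | of_isZero (Z : C) : IsZero Z → Copow P Z
  | biprod {A B : C} : Copow P A → Copow P B → Copow P (A ⊞ B)
  | of_iso {A B : C} : Nonempty (A ≅ B) → Copow P A → Copow P B

lemma Copow.projective {P A : C} (hP : Projective P) (h : Copow P A) : Projective A := by
  induction h with
  | self => exact hP
  | of_isZero Z hZ => exact hZ.projective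
  | biprod _ _ ihA ihB => exact letI := ihA; letI := ihB; inferInstance
  | of_iso i _ ih => exact Projective.of_iso i.some ih

variable {D : Type*} [Category D] [Abelian D]

lemma Copow.map (φ : C ⥤ D) [φ.Additive] {P A : C} (h : Copow P A) :
    Copow (φ.obj P) (φ.obj A) := by
  haveI : PreservesBinaryBiproducts φ := preservesBinaryBiproducts_of_preservesBiproducts φ
  induction h with
  | self => exact .self
  | of_isZero Z hZ => exact .of_isZero _ (φ.map_isZero hZ)
  | biprod _ _ ihA ihB => exact .of_iso ⟨(φ.mapBiprod _ _).symm⟩ (ihA.biprod ihB)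
  | of_iso i _ ih => exact .of_iso ⟨φ.mapIso i.some⟩ ih

lemma Copow.lift (φ : C ⥤ D) [φ.Additive] (P : C) {B : D} (h : Copow (φ.obj P) B) :
    ∃ A : C, Copow P A ∧ Nonempty (φ.obj A ≅ B) := by
  haveI : PreservesBinaryBiproducts φ := preservesBinaryBiproducts_of_preservesBiproducts φ
  induction h with
  | self => exact ⟨P, .self, ⟨Iso.refl _⟩⟩
  | of_isZero Z hZ =>
      exact ⟨0, .of_isZero _ (isZero_zero C), ⟨(φ.map_isZero (isZero_zero C)).iso hZ⟩⟩
  | biprod h1 h2 ih1 ih2 =>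
      obtain ⟨A₁, c₁, ⟨i₁⟩⟩ := ih1
      obtain ⟨A₂, c₂, ⟨i₂⟩⟩ := ih2
      exact ⟨A₁ ⊞ A₂, c₁.biprod c₂, ⟨(φ.mapBiprod _ _).trans (biprod.mapIso i₁ i₂)⟩⟩
  | of_iso i _ ih =>
      obtain ⟨A, c, ⟨j⟩⟩ := ih
      exact ⟨A, c, ⟨j.trans i.some⟩⟩

/-- In an abelian category with Noetherian subobject lattices, every object is covered by a
finite copower of a separator. -/
lemma copow_cover (P : C) (hsep : IsSeparator P) (X : C)
    (hN : WellFoundedGT (Subobject X)) :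
    ∃ (A : C) (p : A ⟶ X), Copow P A ∧ Epi p := by
  let S : Set (Subobject X) := {m | ∃ (A : C) (f : A ⟶ X), Copow P A ∧ imageSubobject f = m}
  have hS : S.Nonempty := ⟨_, 0, (0 : (0 : C) ⟶ X), .of_isZero _ (isZero_zero C), rfl⟩
  obtain ⟨m, hm, hmax⟩ := hN.wf.has_min S hS
  obtain ⟨A, f, hA, rfl⟩ := hm
  by_cases htop : imageSubobject f = ⊤
  · haveI : IsIso (imageSubobject f).arrow := (Subobject.isIso_arrow_iff_eq_top _).mpr htop
    refine ⟨A, f, hA, ?_⟩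
    rw [← imageSubobject_arrow_comp f]
    exact epi_comp _ _
  · exfalso
    have hc : cokernel.π (imageSubobject f).arrow ≠ 0 := by
      intro h0
      haveI : Epi (imageSubobject f).arrow := Abelian.epi_of_cokernel_π_eq_zero _ h0
      haveI : IsIso (imageSubobject f).arrow := isIso_of_mono_of_epi _
      exact htop ((Subobject.isIso_arrow_iff_eq_top _).mp inferInstance)
    obtain ⟨h, hh⟩ : ∃ h : P ⟶ X, h ≫ cokernel.π (imageSubobject f).arrow ≠ 0 := by
      by_contra hcon
      push_neg at hcon
      exact hc ((isSeparator_def P).1 hsep _ 0 fun g => by rw [comp_zero]; exact hcon g)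
    have hmem : imageSubobject (biprod.desc f h) ∈ S := ⟨_, _, hA.biprod .self, rfl⟩
    have hle : imageSubobject f ≤ imageSubobject (biprod.desc f h) := by
      have hle' := imageSubobject_comp_le biprod.inl (biprod.desc f h)
      rwa [biprod.inl_desc] at hle'
    have hne : imageSubobject f ≠ imageSubobject (biprod.desc f h) := by
      intro heq
      apply hh
      have harr : (imageSubobject (biprod.desc f h)).arrow ≫
          cokernel.π (imageSubobject f).arrow = 0 := by
        rw [← Subobject.ofLE_arrow heq.ge, Category.assoc, cokernel.condition, comp_zero]
      have hf'c : biprod.desc f h ≫ cokernel.π (imageSubobject f).arrow = 0 := by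
        rw [← imageSubobject_arrow_comp (biprod.desc f h), Category.assoc, harr, comp_zero]
      calc h ≫ cokernel.π (imageSubobject f).arrow
          = (biprod.inr ≫ biprod.desc f h) ≫ cokernel.π (imageSubobject f).arrow := by
            rw [biprod.inr_desc]
        _ = 0 := by rw [Category.assoc, hf'c, comp_zero]
    exact hmax _ hmem (lt_of_le_of_ne hle hne)

/-- Every object has a "copower presentation" `B ⟶ A ⟶ X ⟶ 0`. -/
lemma copow_presentation (P : C) (hsep : IsSeparator P)
    (hN : ∀ X : C, WellFoundedGT (Subobject X)) (X : C) :
    ∃ (A B : C) (p : A ⟶ X) (d : B ⟶ A) (w : d ≫ p = 0), Copow P A ∧ Copow P B ∧ Epi p ∧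
      Nonempty (IsColimit (CokernelCofork.ofπ p w)) := by
  obtain ⟨A, p, hA, hp⟩ := copow_cover P hsep X (hN X)
  obtain ⟨B, q, hB, hq⟩ := copow_cover P hsep (kernel p) (hN _)
  haveI := hp
  haveI := hq
  refine ⟨A, B, p, q ≫ kernel.ι p, by rw [Category.assoc, kernel.condition, comp_zero],
    hA, hB, hp, ⟨?_⟩⟩
  exact isCokernelEpiComp (Abelian.epiIsCokernelOfKernel _ (kernelIsKernel p)) q rfl

/-- Lifting against an exact sequence with projective source. -/
lemma lift_of_isCokernel {B A X : C} {d : B ⟶ A} {p : A ⟶ X} (w : d ≫ p = 0)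
    (hc : IsColimit (CokernelCofork.ofπ p w)) {T : C} (hT : Projective T)
    (t : T ⟶ A) (ht : t ≫ p = 0) : ∃ s : T ⟶ B, s ≫ d = t := by
  haveI : Projective T := hT
  let S := ShortComplex.mk d p w
  have hex : S.Exact := S.exact_of_g_is_cokernel hc
  haveI := hex.epi_toCycles
  refine ⟨Projective.factorThru (S.liftCycles t ht) S.toCycles, ?_⟩
  have h1 : Projective.factorThru (S.liftCycles t ht) S.toCycles ≫ S.toCycles =
      S.liftCycles t ht := Projective.factorThru_comp _ _
  have h2 : Projective.factorThru (S.liftCycles t ht) S.toCycles ≫ S.toCycles ≫ S.iCycles = t := by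
    rw [← Category.assoc, h1, S.liftCycles_i]
  rw [S.toCycles_i] at h2
  exact h2

end Stmt8Aux

open Stmt8Aux


/-- `X` has projective dimension at most `n`: recursively, `X` is projective, or
there is an epimorphism `p : P ⟶ X` with `P` projective whose kernel has
projective dimension at most `n - 1`. -/
def PdimLE {C : Type*} [Category C] [Abelian C] : ℕ → C → Prop
  | 0, X => Projective X
  | n + 1, X => ∃ (P : C) (p : P ⟶ X), Projective P ∧ Epi p ∧ PdimLE n (kernel p)

/-- Lemma A.5.3: let `φ : 𝒜 → ℬ` be a functor of Artinian abelian `ℂ`-linear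
categories and `P` a projective generator of `𝒜`, `Q = φ(P)`.  If (a) `Q` is a
projective generator of `ℬ`, (b) `φ` is fully faithful on projectives, (c)
every object of `𝒜` has finite projective dimension, and (d) `φ` is right
exact, then `φ` is an equivalence of categories. -/
theorem stmt_8 {CA CB : Type*}
    [Category CA] [Abelian CA] [Linear ℂ CA]
    [Category CB] [Abelian CB] [Linear ℂ CB]
    -- Artinian: finite-dimensional Hom spaces and all objects of finite length
    (hArtA : ∀ X Y : CA, FiniteDimensional ℂ (X ⟶ Y))
    (hLenA : ∀ X : CA, WellFoundedLT (Subobject X) ∧ WellFoundedGT (Subobject X))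
    (hArtB : ∀ X Y : CB, FiniteDimensional ℂ (X ⟶ Y))
    (hLenB : ∀ X : CB, WellFoundedLT (Subobject X) ∧ WellFoundedGT (Subobject X))
    (φ : CA ⥤ CB)
    -- (d) φ is right exact
    [φ.Additive] [PreservesFiniteColimits φ]
    (P : CA) (hP : Projective P) (hPgen : IsSeparator P)
    -- (a) Q = φ(P) is a projective generator of ℬ
    (hQ : Projective (φ.obj P)) (hQgen : IsSeparator (φ.obj P))
    -- (b) φ is fully faithful on projective objects
    (hff : ∀ X Y : CA, Projective X → Projective Y →
      Function.Bijective (fun f : X ⟶ Y => φ.map f))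
    -- (c) 𝒜 has finite projective dimension
    (hpd : ∀ X : CA, ∃ n, PdimLE n X) :
    φ.IsEquivalence := by
  have NA : ∀ X : CA, WellFoundedGT (Subobject X) := fun X => (hLenA X).2
  have NB : ∀ X : CB, WellFoundedGT (Subobject X) := fun X => (hLenB X).2
  -- φ is bijective on Hom(X, Y) for X a copower of P and arbitrary Y
  have ff1 : ∀ (X : CA), Copow P X → ∀ (Y : CA),
      Function.Bijective (fun f : X ⟶ Y => φ.map f) := by
    intro X hX Y
    obtain ⟨A, B, p, d, w, hA, hB, hp, ⟨hc⟩⟩ := copow_presentation P hPgen NA Y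
    haveI : Epi p := hp
    have hXproj : Projective X := hX.projective hP
    have hAproj : Projective A := hA.projective hP
    have hBproj : Projective B := hB.projective hP
    haveI : Projective (φ.obj X) := (hX.map φ).projective hQ
    haveI : Epi (φ.map p) := inferInstance
    have wB : φ.map d ≫ φ.map p = 0 := by rw [← φ.map_comp, w, φ.map_zero]
    have hcB : IsColimit (CokernelCofork.ofπ (φ.map p) wB) :=
      isColimitCoforkMapOfIsColimit' φ w hc
    have key : ∀ f : X ⟶ Y, φ.map f = 0 → f = 0 := by
      intro f hf
      haveI : Projective X := hXproj
      have hg : Projective.factorThru f p ≫ p = f := Projective.factorThru_comp _ _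
      have h0 : φ.map (Projective.factorThru f p) ≫ φ.map p = 0 := by
        rw [← φ.map_comp, hg, hf]
      obtain ⟨s, hs⟩ := lift_of_isCokernel wB hcB ((hX.map φ).projective hQ)
        (φ.map (Projective.factorThru f p)) h0
      obtain ⟨u, hu⟩ := (hff X B hXproj hBproj).2 s
      have : u ≫ d = Projective.factorThru f p := by
        apply (hff X A hXproj hAproj).1
        show φ.map (u ≫ d) = φ.map (Projective.factorThru f p)
        rw [φ.map_comp]
        have hu' : φ.map u = s := hu
        rw [hu', hs]
      rw [← hg, ← this, Category.assoc, w, comp_zero]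
    constructor
    · intro a b hab
      have hab' : φ.map a = φ.map b := hab
      have : φ.map (a - b) = 0 := by rw [φ.map_sub, hab', sub_self]
      have := key _ this
      rwa [sub_eq_zero] at this
    · intro v
      haveI : Projective X := hXproj
      obtain ⟨g, hg⟩ := (hff X A hXproj hAproj).2 (Projective.factorThru v (φ.map p))
      refine ⟨g ≫ p, ?_⟩
      show φ.map (g ≫ p) = v
      have hg' : φ.map g = Projective.factorThru v (φ.map p) := hg
      rw [φ.map_comp, hg', Projective.factorThru_comp]
  refine ⟨⟨fun {X Y} a b hab => ?_⟩, ⟨fun {X Y} v => ?_⟩, ⟨fun Y => ?_⟩⟩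
  · -- faithful
    obtain ⟨A, p, hA, hp⟩ := copow_cover P hPgen X (NA X)
    haveI : Epi p := hp
    have : p ≫ a = p ≫ b := (ff1 A hA Y).1 (by show φ.map _ = φ.map _; rw [φ.map_comp, φ.map_comp, hab])
    exact (cancel_epi p).1 this
  · -- full
    obtain ⟨A, B, p, d, w, hA, hB, hp, ⟨hc⟩⟩ := copow_presentation P hPgen NA X
    haveI : Epi p := hp
    haveI : Epi (φ.map p) := inferInstance
    obtain ⟨g, hg⟩ := (ff1 A hA Y).2 (φ.map p ≫ v)
    have hg' : φ.map g = φ.map p ≫ v := hg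
    have hdg : d ≫ g = 0 := by
      apply (ff1 B hB Y).1
      show φ.map (d ≫ g) = φ.map 0
      rw [φ.map_comp, hg', ← Category.assoc, ← φ.map_comp, w, φ.map_zero, zero_comp,
        φ.map_zero]
    obtain ⟨e, he⟩ := CokernelCofork.IsColimit.desc' hc g hdg
    refine ⟨e, ?_⟩
    have he2 : p ≫ e = g := he
    have : φ.map p ≫ φ.map e = φ.map p ≫ v := by
      rw [← φ.map_comp, he2, hg']
    exact (cancel_epi (φ.map p)).1 this
  · -- essentially surjective
    obtain ⟨A', B', p, d, w, hA', hB', hp, ⟨hc⟩⟩ := copow_presentation (φ.obj P) hQgen NB Y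
    obtain ⟨A, cA, ⟨α⟩⟩ := hA'.lift φ P
    obtain ⟨B, cB, ⟨β⟩⟩ := hB'.lift φ P
    obtain ⟨e, he⟩ := (hff B A (cB.projective hP) (cA.projective hP)).2 (β.hom ≫ d ≫ α.inv)
    have he' : φ.map e = β.hom ≫ d ≫ α.inv := he
    have hcomm : d ≫ α.symm.hom = β.symm.hom ≫ φ.map e := by
      rw [he']
      simp
    exact ⟨cokernel e,
      ⟨((hc.coconePointUniqueUpToIso (cokernelIsCokernel d) ≪≫
          cokernel.mapIso d (φ.map e) β.symm α.symm hcomm) ≪≫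
          (PreservesCokernel.iso φ e).symm).symm⟩⟩
end

section
/- Fix integers m, ℓ > 0, e > 1, κ = −e, a composition s ∈ 𝒞_{m,ℓ}, and set π + ρ = (s_1, s_1−1, …, 1, s_2, s_2−1, …, 1, …, s_ℓ, …, 1) ∈ ℤ^m. Suppose μ + π ⊴ λ + π in the partial order ⊴ generated by λ' = (s_α • μ')_+ < μ' for real affine roots α ∉ Π_s with ⟨μ' + ρ̂, α⟩ ∈ ℤ_{>0}, where λ ∈ 𝒫_{n,s} (all entries of λ are ≥ 0, s-dominant, with |λ| = n) and μ ∈ ℤ^s_{≥0} is s-dominant integral. Then μ ∈ 𝒫_{n,s}, i.e., all entries of μ are nonnegative. -/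
noncomputable section

/-- The affine weight space `t* = ℂδ ⊕ ℂ^m ⊕ ℂω₀`. -/
abbrev AffWt (m : ℕ) := ℂ × (Fin m → ℂ) × ℂ

/-- The standard bilinear form on `t*`. -/
def affForm (m : ℕ) (v w : AffWt m) : ℂ :=
  v.1 * w.2.2 + w.1 * v.2.2 + ∑ i, v.2.1 i * w.2.1 i

/-- The real affine root `εᵢ - εⱼ + nδ`. -/
def rootVec (m : ℕ) (i j : Fin m) (n : ℤ) : AffWt m :=
  ((n : ℂ), Pi.single i 1 - Pi.single j 1, 0)

/-- The reflection `s_α(v) = v - ⟨v, α⟩ α` in the real root `α = εᵢ - εⱼ + nδ`. -/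
def reflRoot (m : ℕ) (i j : Fin m) (n : ℤ) (v : AffWt m) : AffWt m :=
  v - affForm m v (rootVec m i j n) • rootVec m i j n

/-- `ρ̂ = ρ + m ω₀`, `ρ = (m,…,1)`. -/
def rhoHat (m : ℕ) : AffWt m := (0, fun i => (m : ℂ) - (i : ℕ), (m : ℂ))

/-- Action of `w ∈ S_m` on `t*`. -/
def permAct (m : ℕ) (w : Equiv.Perm (Fin m)) (v : AffWt m) : AffWt m :=
  (v.1, fun i => v.2.1 (w⁻¹ i), v.2.2)

/-- Dot action of the reflection `s_α`, `α = εᵢ - εⱼ + nδ`. -/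
def dotRefl (m : ℕ) (i j : Fin m) (n : ℤ) (v : AffWt m) : AffWt m :=
  reflRoot m i j n (v + rhoHat m) - rhoHat m

/-- Dot action of `w ∈ S_m`. -/
def dotPerm (m : ℕ) (w : Equiv.Perm (Fin m)) (v : AffWt m) : AffWt m :=
  permAct m w (v + rhoHat m) - rhoHat m

variable (m ℓ : ℕ) (s : Fin ℓ → ℕ)

def blockStart (p : Fin ℓ) : ℕ := ∑ q ∈ Finset.univ.filter (· < p), s q

def inBlock (p : Fin ℓ) (j : Fin m) : Prop :=
  blockStart ℓ s p ≤ (j : ℕ) ∧ (j : ℕ) < blockStart ℓ s p + s p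

def sameBlock (i j : Fin m) : Prop :=
  ∃ p : Fin ℓ, inBlock m ℓ s p i ∧ inBlock m ℓ s p j

/-- A permutation lying in `S_s` (preserving each block). -/
def blockPerm (w : Equiv.Perm (Fin m)) : Prop :=
  ∀ (p : Fin ℓ) (j : Fin m), inBlock m ℓ s p j → inBlock m ℓ s p (w j)

/-- `s`-dominance of an affine weight: `⟨v, αᵢ⟩ ∈ ℕ` for simple roots of `Π_s`. -/
def sDomAff (v : AffWt m) : Prop :=
  ∀ i j : Fin m, (i : ℕ) + 1 = (j : ℕ) → sameBlock m ℓ s i j →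
    ∃ k : ℕ, v.2.1 i - v.2.1 j = (k : ℂ)

/-- The affine simple roots `α₁,…,α_{m-1}, α₀` (with `α₀ = δ - ε₁ + ε_m`). -/
def aSimple (i : Fin m) : AffWt m :=
  if h : (i : ℕ) + 1 < m then rootVec m i ⟨(i : ℕ) + 1, h⟩ 0
  else ((1 : ℂ), Pi.single i 1 - Pi.single ⟨0, i.pos⟩ 1, 0)

/-- The order on `t*`: `v ≤ v'` iff `v' - v ∈ ℕ Π̂⁺`. -/
def leAff (v v' : AffWt m) : Prop :=
  ∃ cc : Fin m → ℕ, v' = v + ∑ i, (cc i : ℂ) • aSimple m i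

/-- One step of the order `⊴` of 5.2(b), going down from `hi` to `lo`:
`lo = (s_α • hi)_+ < hi` for a real affine root `α = εᵢ - εⱼ + nδ ∉ Π_s` with
`⟨hi + ρ̂, α⟩ ∈ ℤ_{>0}` and `s_α • hi + ρ̂` `s`-regular; `(·)_+` denotes the
`S_s`-dot-conjugate which is `s`-dominant. -/
def StepDown (hi lo : AffWt m) : Prop :=
  ∃ (i j : Fin m) (n : ℤ), i ≠ j ∧ ¬(sameBlock m ℓ s i j ∧ n = 0) ∧
    (∃ k : ℕ, 0 < k ∧ affForm m (hi + rhoHat m) (rootVec m i j n) = (k : ℂ)) ∧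
    (∀ a b : Fin m, a ≠ b → sameBlock m ℓ s a b →
      affForm m (dotRefl m i j n hi + rhoHat m) (rootVec m a b 0) ≠ 0) ∧
    (∃ w : Equiv.Perm (Fin m), blockPerm m ℓ s w ∧
      lo = dotPerm m w (dotRefl m i j n hi)) ∧
    sDomAff m ℓ s lo ∧ leAff m lo hi ∧ lo ≠ hi

end


section AuxiliaryLemmas

lemma aux_sum_single_pair {m : ℕ} (i j : Fin m) (v : Fin m → ℂ) :
    ∑ t, v t * ((Pi.single i (1:ℂ) - Pi.single j (1:ℂ) : Fin m → ℂ)) t = v i - v j := by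
  have h1 : ∀ a : Fin m, ∑ t, v t * (Pi.single a (1:ℂ) : Fin m → ℂ) t = v a := by
    intro a
    simp [Pi.single_apply, mul_ite]
  simp only [Pi.sub_apply, mul_sub, Finset.sum_sub_distrib, h1]

lemma aux_blockStart_zero (ℓ : ℕ) (s : Fin ℓ → ℕ) (h0 : 0 < ℓ) :
    blockStart ℓ s ⟨0, h0⟩ = 0 := by
  rw [blockStart]
  have h : Finset.univ.filter (· < (⟨0, h0⟩ : Fin ℓ)) = ∅ := by
    ext q; simp [Fin.lt_def]
  rw [h, Finset.sum_empty]

lemma aux_blockStart_succ (ℓ : ℕ) (s : Fin ℓ → ℕ) (t : ℕ) (h : t + 1 < ℓ) :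
    blockStart ℓ s ⟨t+1, h⟩
      = blockStart ℓ s ⟨t, Nat.lt_of_succ_lt h⟩ + s ⟨t, Nat.lt_of_succ_lt h⟩ := by
  rw [blockStart, blockStart]
  have hins : Finset.univ.filter (· < (⟨t+1, h⟩ : Fin ℓ)) =
      insert (⟨t, Nat.lt_of_succ_lt h⟩ : Fin ℓ)
        (Finset.univ.filter (· < (⟨t, Nat.lt_of_succ_lt h⟩ : Fin ℓ))) := by
    ext q; simp [Fin.lt_def, Fin.ext_iff]; omega
  rw [hins, Finset.sum_insert (by simp [Fin.lt_def])]
  ring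

lemma aux_blockStart_last (ℓ : ℕ) (s : Fin ℓ → ℕ) (h0 : 0 < ℓ) :
    blockStart ℓ s ⟨ℓ-1, by omega⟩ + s ⟨ℓ-1, by omega⟩ = ∑ q, s q := by
  have huniv : (Finset.univ : Finset (Fin ℓ)) =
      insert (⟨ℓ-1, by omega⟩ : Fin ℓ)
        (Finset.univ.filter (· < (⟨ℓ-1, by omega⟩ : Fin ℓ))) := by
    ext q
    simp [Fin.lt_def, Fin.ext_iff]
    omega
  rw [blockStart]
  conv_rhs => rw [huniv]
  rw [Finset.sum_insert (by simp [Fin.lt_def])]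
  ring

lemma aux_block_le (ℓ : ℕ) (s : Fin ℓ → ℕ) (p : Fin ℓ) :
    blockStart ℓ s p + s p ≤ ∑ q, s q := by
  rw [blockStart]
  have h1 : s p + ∑ q ∈ Finset.univ.filter (· < p), s q
      = ∑ q ∈ insert p (Finset.univ.filter (· < p)), s q := by
    rw [Finset.sum_insert (by simp)]
  rw [add_comm, h1]
  exact Finset.sum_le_sum_of_subset (Finset.subset_univ _)

lemma aux_exists_block (m ℓ : ℕ) (s : Fin ℓ → ℕ) (h0 : 0 < ℓ) (hs : ∑ p, s p = m)
    (j : Fin m) : ∃ p, inBlock m ℓ s p j := by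
  suffices H : ∀ t : ℕ, ∀ h : t < ℓ, (j:ℕ) < blockStart ℓ s ⟨t,h⟩ + s ⟨t,h⟩ →
      ∃ p, inBlock m ℓ s p j by
    refine H (ℓ-1) (by omega) ?_
    rw [aux_blockStart_last ℓ s h0, hs]
    exact j.isLt
  intro t
  induction t with
  | zero =>
    intro h hj
    exact ⟨⟨0, h⟩, by rw [aux_blockStart_zero ℓ s h0] at hj ⊢; omega, hj⟩
  | succ t ih =>
    intro h hj
    by_cases hle : blockStart ℓ s ⟨t+1, h⟩ ≤ (j:ℕ)
    · exact ⟨⟨t+1, h⟩, hle, hj⟩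
    · push_neg at hle
      apply ih (Nat.lt_of_succ_lt h)
      rw [aux_blockStart_succ ℓ s t h] at hle
      omega

/-- The invariant carried along the chain: level is `c` and every entry of
`v + ρ̂` is a positive integer. -/
def InvP (m : ℕ) (c : ℂ) (v : AffWt m) : Prop :=
  v.2.2 = c ∧ ∀ t : Fin m, ∃ k : ℕ, 0 < k ∧ v.2.1 t + ((m:ℂ) - (t:ℕ)) = (k:ℂ)

lemma aux_step {m ℓ : ℕ} {s : Fin ℓ → ℕ} {c : ℂ} {e : ℕ}
    (hcm : c + (m:ℕ) = -(e:ℂ))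
    (hi lo : AffWt m) (hsd : StepDown m ℓ s hi lo) (hInv : InvP m c hi) :
    InvP m c lo := by
  obtain ⟨i, j, nn, hij, -, ⟨k, hk, hkform⟩, -, ⟨w, -, hlo⟩, -, ⟨cc, hcc⟩, -⟩ := hsd
  obtain ⟨hlev, hpos⟩ := hInv
  have hm : 0 < m := i.pos
  have hrefl : dotRefl m i j nn hi = hi - (k:ℂ) • rootVec m i j nn := by
    rw [dotRefl, reflRoot, hkform]
    generalize (↑k:ℂ) • rootVec m i j nn = z
    abel
  -- components of dotPerm
  have hcomp1 : ∀ v : AffWt m, (dotPerm m w v).1 = v.1 := by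
    intro v
    simp only [dotPerm, permAct, rhoHat, Prod.fst_sub, Prod.fst_add]
    ring
  have hcomp3 : ∀ v : AffWt m, (dotPerm m w v).2.2 = v.2.2 := by
    intro v
    simp only [dotPerm, permAct, rhoHat, Prod.snd_sub, Prod.snd_add]
    ring
  have hcomp2 : ∀ (v : AffWt m) (t : Fin m), (dotPerm m w v).2.1 t
      = v.2.1 (w⁻¹ t) + ((m:ℂ) - ((w⁻¹ t : Fin m) : ℕ)) - ((m:ℂ) - (t:ℕ)) := by
    intro v t
    simp only [dotPerm, permAct, rhoHat, Prod.snd_sub, Prod.snd_add, Prod.fst_sub,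
      Prod.fst_add, Pi.sub_apply, Pi.add_apply]
  -- components of hi - k • rootVec
  have hsub1 : (hi - (k:ℂ) • rootVec m i j nn).1 = hi.1 - (k:ℂ) * (nn:ℂ) := by
    simp only [rootVec, Prod.fst_sub, Prod.smul_fst, smul_eq_mul]
  have hsub3 : (hi - (k:ℂ) • rootVec m i j nn).2.2 = hi.2.2 := by
    simp only [rootVec, Prod.snd_sub, Prod.smul_snd, smul_eq_mul]
    ring
  have hsub2 : ∀ t : Fin m, (hi - (k:ℂ) • rootVec m i j nn).2.1 t
      = hi.2.1 t - (k:ℂ) * ((Pi.single i (1:ℂ) - Pi.single j (1:ℂ) : Fin m → ℂ) t) := by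
    intro t
    simp only [rootVec, Prod.snd_sub, Prod.smul_snd, Prod.fst_sub, Prod.smul_fst,
      Pi.sub_apply, Pi.smul_apply, smul_eq_mul]
  have hlev' : lo.2.2 = c := by
    rw [hlo, hrefl, hcomp3, hsub3]
    exact hlev
  -- δ-coordinate computation
  have hδlo : lo.1 = hi.1 - (k:ℂ) * (nn:ℂ) := by
    rw [hlo, hrefl, hcomp1, hsub1]
  have hval : ∀ a : Fin m, (aSimple m a).1
      = if a = (⟨m-1, by omega⟩ : Fin m) then 1 else 0 := by
    intro a
    rw [aSimple]
    by_cases h : (a:ℕ) + 1 < m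
    · rw [dif_pos h, if_neg (by simp [Fin.ext_iff]; omega)]
      simp [rootVec]
    · rw [dif_neg h, if_pos (by simp [Fin.ext_iff]; omega)]
  have hδsum : hi.1 = lo.1 + ((cc ⟨m-1, by omega⟩ : ℕ) : ℂ) := by
    have h1 := congrArg Prod.fst hcc
    simp only [Prod.fst_add] at h1
    rw [h1]
    congr 1
    rw [Prod.fst_sum]
    have h2 : ∀ a : Fin m, ((cc a : ℂ) • aSimple m a).1
        = (cc a : ℂ) * (if a = (⟨m-1, by omega⟩ : Fin m) then 1 else 0) := by
      intro a
      rw [Prod.smul_fst, smul_eq_mul, hval a]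
    rw [Finset.sum_congr rfl (fun a _ => h2 a)]
    simp [mul_ite, Finset.sum_ite_eq']
  have hknn : (k:ℤ) * nn = ((cc ⟨m-1, by omega⟩ : ℕ) : ℤ) := by
    have h2 : (k:ℂ) * (nn:ℂ) = ((cc ⟨m-1, by omega⟩ : ℕ) : ℂ) := by
      rw [hδlo] at hδsum
      linear_combination hδsum
    exact_mod_cast h2
  have hnn : 0 ≤ nn := by
    by_contra hneg
    push_neg at hneg
    have hneg2 : (k:ℤ) * nn < 0 :=
      mul_neg_of_pos_of_neg (by exact_mod_cast hk) hneg
    rw [hknn] at hneg2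
    exact absurd hneg2 (not_lt.mpr (Int.natCast_nonneg _))
  -- the value of k
  have hkeq : (k:ℂ) = (nn:ℂ) * (c + (m:ℕ))
      + (hi.2.1 i + ((m:ℂ) - (i:ℕ))) - (hi.2.1 j + ((m:ℂ) - (j:ℕ))) := by
    rw [← hkform]
    show affForm m (hi + rhoHat m) (rootVec m i j nn) = _
    rw [affForm]
    have hroot2 : (rootVec m i j nn).2.1
        = (Pi.single i (1:ℂ) - Pi.single j (1:ℂ) : Fin m → ℂ) := rfl
    rw [hroot2, aux_sum_single_pair i j ((hi + rhoHat m).2.1)]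
    simp only [rootVec, rhoHat, Prod.snd_add, Prod.fst_add, Pi.add_apply, hlev]
    ring
  -- entries of lo
  have hentry : ∀ t : Fin m, lo.2.1 t + ((m:ℂ) - (t:ℕ)) =
      hi.2.1 (w⁻¹ t) + ((m:ℂ) - ((w⁻¹ t : Fin m) : ℕ))
        - (k:ℂ) * ((Pi.single i (1:ℂ) - Pi.single j (1:ℂ) : Fin m → ℂ) (w⁻¹ t)) := by
    intro t
    rw [hlo, hrefl, hcomp2, hsub2]
    ring
  refine ⟨hlev', ?_⟩
  intro t
  have het := hentry t
  rcases eq_or_ne (w⁻¹ t) i with hui | hui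
  · obtain ⟨aj, haj, hXj⟩ := hpos j
    have hnncast : ((nn.toNat : ℕ) : ℂ) = ((nn : ℤ) : ℂ) := by
      exact_mod_cast congrArg (Int.cast : ℤ → ℂ) (Int.toNat_of_nonneg hnn)
    refine ⟨aj + nn.toNat * e, by omega, ?_⟩
    rw [het, hui]
    have hsingle : (Pi.single i (1:ℂ) - Pi.single j (1:ℂ) : Fin m → ℂ) i = 1 := by
      simp [Pi.single_apply, hij]
    rw [hsingle]
    push_cast
    linear_combination (-1 : ℂ) * hkeq + hXj - (e:ℂ) * hnncast - (nn:ℂ) * hcm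
  · rcases eq_or_ne (w⁻¹ t) j with huj | huj
    · obtain ⟨aj, haj, hXj⟩ := hpos j
      refine ⟨aj + k, by omega, ?_⟩
      rw [het, huj]
      have hsingle : (Pi.single i (1:ℂ) - Pi.single j (1:ℂ) : Fin m → ℂ) j = -1 := by
        simp [Pi.single_apply, hij]
      rw [hsingle]
      push_cast
      linear_combination hXj
    · obtain ⟨au, hau, hXu⟩ := hpos (w⁻¹ t)
      refine ⟨au, hau, ?_⟩
      rw [het]
      have hsingle : (Pi.single i (1:ℂ) - Pi.single j (1:ℂ) : Fin m → ℂ) (w⁻¹ t) = 0 := by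
        rw [Pi.sub_apply, Pi.single_apply, Pi.single_apply, if_neg hui, if_neg huj, sub_self]
      rw [hsingle, mul_zero, sub_zero]
      exact hXu

end AuxiliaryLemmas

/-- Proposition A.6.1: fix `m, ℓ > 0`, `e > 1`, `κ = -e`, `c = κ - m`, a
composition `s ∈ 𝒞_{m,ℓ}` and `π` with
`π + ρ = (s_1, s_1-1, …, 1, …, s_ℓ, …, 1)`.  If `λ ∈ 𝒫_{n,s}` (nonnegative,
`s`-dominant, `|λ| = n`), `μ ∈ ℤ^s_{≥0}` is `s`-dominant integral, and
`μ + π ⊴ λ + π` for the order `⊴` generated by the steps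
`(s_α • μ')_+ < μ'` (for real affine roots `α ∉ Π_s` with
`⟨μ' + ρ̂, α⟩ ∈ ℤ_{>0}`), applied to the weights `~(λ+π)`, `~(μ+π)` of level
`c` (where `~v = v̂ + z_v δ`, `z_v = -⟨v, 2ρ+v⟩/2κ`), then all entries of `μ`
are nonnegative, i.e. `μ ∈ 𝒫_{n,s}`. -/
theorem stmt_11 (m ℓ e n : ℕ) (hm : 0 < m) (hℓ : 0 < ℓ) (he : 1 < e)
    (s : Fin ℓ → ℕ) (hs : ∑ p, s p = m)
    (κ : ℂ) (hκ : κ = -(e : ℂ)) (c : ℂ) (hc : c = κ - m)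
    (π : Fin m → ℂ)
    (hπ : ∀ (p : Fin ℓ) (j : Fin m), inBlock m ℓ s p j →
      π j + ((m : ℂ) - (j : ℕ)) = (s p : ℂ) - (((j : ℕ) - blockStart ℓ s p : ℕ) : ℂ))
    (tilde : (Fin m → ℂ) → AffWt m)
    (htilde : ∀ v : Fin m → ℂ,
      tilde v = (-(∑ i, v i * (2 * ((m : ℂ) - (i : ℕ)) + v i)) / (2 * κ), v, c))
    (lam mu : Fin m → ℤ)
    (hlamdom : ∀ i j : Fin m, (i : ℕ) + 1 = (j : ℕ) → sameBlock m ℓ s i j →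
      lam j ≤ lam i)
    (hlampos : ∀ j, 0 ≤ lam j)
    (hlamn : ∑ j, lam j = (n : ℤ))
    (hmudom : ∀ i j : Fin m, (i : ℕ) + 1 = (j : ℕ) → sameBlock m ℓ s i j →
      mu j ≤ mu i)
    (hrel : Relation.ReflTransGen (StepDown m ℓ s)
      (tilde fun j => (lam j : ℂ) + π j) (tilde fun j => (mu j : ℂ) + π j)) :
    ∀ j, 0 ≤ mu j := by

  classical
  have hcm : c + (m:ℕ) = -(e:ℂ) := by rw [hc, hκ]; ring
  have hchain : ∀ a b : AffWt m, Relation.ReflTransGen (StepDown m ℓ s) a b →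
      InvP m c a → InvP m c b := by
    intro a b h
    induction h with
    | refl => exact id
    | tail _ h2 ih => exact fun ha => aux_step hcm _ _ h2 (ih ha)
  have hbase : InvP m c (tilde fun j => (lam j : ℂ) + π j) := by
    constructor
    · rw [htilde]
    · intro t
      obtain ⟨p, hp1, hp2⟩ := aux_exists_block m ℓ s hℓ hs t
      refine ⟨(lam t).toNat + (s p - ((t:ℕ) - blockStart ℓ s p)), by omega, ?_⟩
      rw [htilde]
      show ((lam t : ℂ) + π t) + ((m:ℂ) - ((t:ℕ):ℂ)) = _
      have hπt := hπ p t ⟨hp1, hp2⟩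
      have hcast1 : (((lam t).toNat : ℕ) : ℂ) = ((lam t : ℤ) : ℂ) := by
        exact_mod_cast congrArg (Int.cast : ℤ → ℂ) (Int.toNat_of_nonneg (hlampos t))
      have hsub : (t:ℕ) - blockStart ℓ s p ≤ s p := by omega
      push_cast [Nat.cast_sub hsub]
      linear_combination hπt - hcast1
  obtain ⟨-, hmu⟩ := hchain _ _ hrel hbase
  have key : ∀ (t : Fin m) (p : Fin ℓ), inBlock m ℓ s p t →
      (1:ℤ) ≤ mu t + (s p : ℤ) - (((t:ℕ) - blockStart ℓ s p : ℕ) : ℤ) := by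
    intro t p hp
    obtain ⟨k, hk, hkk⟩ := hmu t
    rw [htilde] at hkk
    have hkk' : ((mu t : ℂ) + π t) + ((m:ℂ) - ((t:ℕ):ℂ)) = ((k:ℕ):ℂ) := hkk
    have hπt := hπ p t hp
    have hC : ((mu t : ℤ) : ℂ) + ((s p : ℕ) : ℂ)
        - (((t:ℕ) - blockStart ℓ s p : ℕ) : ℂ) = ((k:ℕ) : ℂ) := by
      linear_combination hkk' - hπt
    have hZ : (mu t : ℤ) + ((s p : ℕ) : ℤ) - (((t:ℕ) - blockStart ℓ s p : ℕ) : ℤ)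
        = ((k:ℕ) : ℤ) := by exact_mod_cast hC
    omega
  have hdesc : ∀ d : ℕ, ∀ t : Fin m, ∀ p : Fin ℓ, inBlock m ℓ s p t →
      blockStart ℓ s p + s p - 1 - (t:ℕ) ≤ d → 0 ≤ mu t := by
    intro d
    induction d with
    | zero =>
      intro t p hp hd
      have h1 := key t p hp
      have h2 := hp.1
      have h3 := hp.2
      omega
    | succ d ih =>
      intro t p hp hd
      by_cases hlast : blockStart ℓ s p + s p ≤ (t:ℕ) + 1
      · have h1 := key t p hp
        have h2 := hp.1
        have h3 := hp.2
        omega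
      · have htlt : (t:ℕ) + 1 < m := by
          have hle := aux_block_le ℓ s p
          rw [hs] at hle
          omega
        have hp' : inBlock m ℓ s p ⟨(t:ℕ)+1, htlt⟩ := by
          constructor
          · show blockStart ℓ s p ≤ (t:ℕ) + 1
            have := hp.1
            omega
          · show (t:ℕ) + 1 < blockStart ℓ s p + s p
            omega
        have h0 : 0 ≤ mu ⟨(t:ℕ)+1, htlt⟩ := by
          apply ih _ p hp'
          show blockStart ℓ s p + s p - 1 - ((t:ℕ)+1) ≤ d
          omega
        have hmono := hmudom t ⟨(t:ℕ)+1, htlt⟩ rfl ⟨p, hp, hp'⟩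
        omega
  intro t
  obtain ⟨p, hp⟩ := aux_exists_block m ℓ s hℓ hs t
  exact hdesc (blockStart ℓ s p + s p) t p hp (by omega)
end

section
/- For each integer a, write a = c_a + e(p_a − 1) + eℓ r_a with c_a ∈ {1,…,e} (representing ℤ/eℤ), p_a ∈ {1,…,ℓ}, r_a ∈ ℤ, and set φ_a = c_a + e·r_a. Then the assignment α̲ = (a_1 > a_2 > ⋯ > a_m) ↦ (α, ν), where ν ∈ 𝒞_{m,ℓ} records the multiset of values p_{a_i}, and α = (φ_{a_{w(1)}},…,φ_{a_{w(m)}}) with w ∈ S_m minimal such that (p_{a_{w(1)}},…,p_{a_{w(m)}}) = (ℓ^{ν_ℓ},…,2^{ν_2},1^{ν_1}), defines a bijection from the set of strictly decreasing m-tuples of integers onto the disjoint union over compositions ν of m with ℓ parts of the sets ℤ^{ν°}_{>0} × {ν}, where ℤ^{ν°}_{>0} is the set of tuples strictly decreasing within each block of the reversed composition ν° = (ν_ℓ,…,ν_1). -/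
open scoped Classical

section
variable (e ℓ : ℕ)

/-- For `a ∈ ℤ` written as `a = c_a + e(p_a - 1) + eℓ r_a` with `c_a ∈ {1,…,e}`,
`p_a ∈ {1,…,ℓ}`, `r_a ∈ ℤ`: the component `p_a` (1-based). -/
def pOf (a : ℤ) : ℕ := (((a - 1).emod ((e : ℤ) * ℓ)).toNat / e) + 1

/-- `φ_a = c_a + e·r_a`. -/
def phiOf (a : ℤ) : ℤ := ((a - 1).emod e + 1) + (e : ℤ) * ((a - 1).ediv ((e : ℤ) * ℓ))

variable (m : ℕ)

/-- `ν_p` records the number of entries of the tuple with `p`-component `p+1`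
(0-based `p`). -/
def nuOf (a : Fin m → ℤ) (p : Fin ℓ) : ℕ :=
  (Finset.univ.filter fun i : Fin m => pOf e ℓ (a i) = (p : ℕ) + 1).card

/-- The concatenated list of `φ`-values, blocks ordered by decreasing `p`
(`p = ℓ, ℓ-1, …, 1`), within each block in the original order of the tuple. -/
def phiList (a : Fin m → ℤ) : List ℤ :=
  ((List.range ℓ).reverse).flatMap fun p =>
    ((List.ofFn a).filter fun x => pOf e ℓ x = p + 1).map (phiOf e ℓ)

/-- The map `α̲ ↦ (ν, α)` of (A.7). -/
def bijMap (a : Fin m → ℤ) : (Fin ℓ → ℕ) × (Fin m → ℤ) :=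
  (nuOf e ℓ m a, fun j : Fin m => (phiList e ℓ m a).getD (j : ℕ) 0)

/-- Start of the `q`-th block of a composition `μ` (blocks of sizes `μ 0, μ 1, …`). -/
def bStart (μ : Fin ℓ → ℕ) (q : Fin ℓ) : ℕ := ∑ q' ∈ Finset.univ.filter (· < q), μ q'

/-- `i` and `j` lie in the same block of the composition `μ`. -/
def sameBlk (μ : Fin ℓ → ℕ) (i j : Fin m) : Prop :=
  ∃ q : Fin ℓ, (bStart ℓ μ q ≤ (i : ℕ) ∧ (i : ℕ) < bStart ℓ μ q + μ q) ∧
    (bStart ℓ μ q ≤ (j : ℕ) ∧ (j : ℕ) < bStart ℓ μ q + μ q)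

end

namespace A713

/-- Inverse of `a ↦ (pOf a, phiOf a)`. -/
def psi (e ℓ : ℕ) (p : ℕ) (φ : ℤ) : ℤ :=
  ((φ - 1).emod e + 1) + (e : ℤ) * ((p : ℤ) - 1) + (e : ℤ) * (ℓ : ℤ) * ((φ - 1).ediv e)

lemma emod_ediv_eq (n a q r : ℤ) (hn : 0 < n) (h : a = r + n * q) (h0 : 0 ≤ r) (h1 : r < n) :
    a.emod n = r ∧ a.ediv n = q := by
  have := (Int.ediv_emod_unique (a := a) (q := q) (r := r) hn).mpr ⟨h.symm, h0, h1⟩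
  exact ⟨this.2, this.1⟩

lemma emodE (a b : ℤ) : a.emod b = a % b := rfl
lemma edivE (a b : ℤ) : a.ediv b = a / b := rfl

variable {e ℓ : ℕ}

lemma decomp_emod_ediv (he : 0 < e) (hl : 0 < ℓ) (c : ℤ) (p : ℕ) (r : ℤ)
    (hc : 1 ≤ c ∧ c ≤ (e:ℤ)) (hp : 1 ≤ p ∧ p ≤ ℓ) :
    (c + (e:ℤ) * ((p:ℤ) - 1) + (e:ℤ) * ℓ * r - 1).emod ((e:ℤ) * ℓ)
        = (c - 1) + (e:ℤ) * ((p:ℤ) - 1) ∧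
    (c + (e:ℤ) * ((p:ℤ) - 1) + (e:ℤ) * ℓ * r - 1).ediv ((e:ℤ) * ℓ) = r := by
  have hE : (0:ℤ) < (e:ℤ) * ℓ := by positivity
  have hp1 : (1:ℤ) ≤ (p:ℤ) := by exact_mod_cast hp.1
  have hpl : ((p:ℤ)) ≤ (ℓ:ℤ) := by exact_mod_cast hp.2
  have he1 : (1:ℤ) ≤ (e:ℤ) := by exact_mod_cast he
  exact emod_ediv_eq _ _ _ _ hE (by ring) (by nlinarith [hc.1]) (by nlinarith [hc.2])

lemma pOf_decomp (he : 0 < e) (hl : 0 < ℓ) (c : ℤ) (p : ℕ) (r : ℤ)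
    (hc : 1 ≤ c ∧ c ≤ (e:ℤ)) (hp : 1 ≤ p ∧ p ≤ ℓ) :
    pOf e ℓ (c + (e:ℤ) * ((p:ℤ) - 1) + (e:ℤ) * ℓ * r) = p := by
  rw [pOf, (decomp_emod_ediv he hl c p r hc hp).1]
  have hk : (c - 1 + (e:ℤ) * ((p:ℤ) - 1)).toNat = (c - 1).toNat + e * (p - 1) := by
    have h1 : (e:ℤ) * ((p:ℤ) - 1) = ((e * (p - 1) : ℕ) : ℤ) := by
      push_cast [Nat.cast_sub hp.1]; ring
    rw [h1]; omega
  rw [hk, Nat.add_mul_div_left _ _ he, Nat.div_eq_of_lt (by omega)]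
  omega

lemma phiOf_decomp (he : 0 < e) (hl : 0 < ℓ) (c : ℤ) (p : ℕ) (r : ℤ)
    (hc : 1 ≤ c ∧ c ≤ (e:ℤ)) (hp : 1 ≤ p ∧ p ≤ ℓ) :
    phiOf e ℓ (c + (e:ℤ) * ((p:ℤ) - 1) + (e:ℤ) * ℓ * r) = c + (e:ℤ) * r := by
  obtain ⟨h1, h2⟩ := decomp_emod_ediv he hl c p r hc hp
  have he0 : (0:ℤ) < (e:ℤ) := by exact_mod_cast he
  have hm : (c + (e:ℤ) * ((p:ℤ) - 1) + (e:ℤ) * ℓ * r - 1).emod e = c - 1 := by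
    have hp1 : (1:ℤ) ≤ (p:ℤ) := by exact_mod_cast hp.1
    refine (emod_ediv_eq _ _ (((p:ℤ)-1) + (ℓ:ℤ) * r) _ he0 (by ring) (by omega) (by omega)).1
  rw [phiOf, hm, h2]; ring

/-- Every integer is `c + e(p-1) + eℓr` with the canonical components. -/
lemma exists_decomp (he : 0 < e) (hl : 0 < ℓ) (a : ℤ) :
    ∃ c r : ℤ, (1 ≤ c ∧ c ≤ (e:ℤ)) ∧ (1 ≤ pOf e ℓ a ∧ pOf e ℓ a ≤ ℓ) ∧
      a = c + (e:ℤ) * ((pOf e ℓ a : ℤ) - 1) + (e:ℤ) * ℓ * r ∧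
      phiOf e ℓ a = c + (e:ℤ) * r := by
  have hE : (0:ℤ) < (e:ℤ) * ℓ := by positivity
  have he0 : (0:ℤ) < (e:ℤ) := by exact_mod_cast he
  set s := (a - 1) % ((e:ℤ) * ℓ) with hs
  set r := (a - 1) / ((e:ℤ) * ℓ) with hr
  have hs0 : 0 ≤ s := Int.emod_nonneg _ (by positivity)
  have hsE : s < (e:ℤ) * ℓ := Int.emod_lt_of_pos _ hE
  have hsr : a - 1 = s + ((e:ℤ)*ℓ) * r := by
    have := Int.emod_add_mul_ediv (a - 1) ((e:ℤ)*ℓ); linarith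
  have hpof : pOf e ℓ a = s.toNat / e + 1 := by rw [pOf, emodE]
  have hsint : ((s.toNat : ℕ) : ℤ) = s := Int.toNat_of_nonneg hs0
  have hslt : s.toNat < e * ℓ := by
    have : ((s.toNat : ℕ) : ℤ) < ((e * ℓ : ℕ) : ℤ) := by rw [hsint]; push_cast; exact hsE
    exact_mod_cast this
  refine ⟨s % e + 1, r, ⟨by have := Int.emod_nonneg s (ne_of_gt he0); omega,
      by have := Int.emod_lt_of_pos s he0; omega⟩, ?_, ?_, ?_⟩
  · rw [hpof]
    have h2 : s.toNat / e < ℓ := (Nat.div_lt_iff_lt_mul he).mpr (by rwa [Nat.mul_comm] at hslt)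
    exact ⟨Nat.succ_le_succ (Nat.zero_le _), h2⟩
  · rw [hpof]
    push_cast
    rw [hsint]
    have := Int.emod_add_mul_ediv s (e:ℤ)
    linarith
  · rw [phiOf, emodE, edivE, ← hr]
    congr 1
    rw [hs, Int.emod_emod_of_dvd _ ⟨(ℓ:ℤ), rfl⟩]

lemma pOf_bounds (he : 0 < e) (hl : 0 < ℓ) (a : ℤ) : 1 ≤ pOf e ℓ a ∧ pOf e ℓ a ≤ ℓ :=
  (exists_decomp he hl a).choose_spec.choose_spec.2.1

lemma psi_pOf_phiOf (he : 0 < e) (hl : 0 < ℓ) (a : ℤ) :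
    psi e ℓ (pOf e ℓ a) (phiOf e ℓ a) = a := by
  obtain ⟨c, r, hc, hp, hd, hphi⟩ := exists_decomp he hl a
  have he0 : (0:ℤ) < (e:ℤ) := by exact_mod_cast he
  have h1 : (phiOf e ℓ a - 1).emod e = c - 1 ∧ (phiOf e ℓ a - 1).ediv e = r :=
    emod_ediv_eq _ _ _ _ he0 (by rw [hphi]; ring) (by omega) (by omega)
  rw [psi, h1.1, h1.2]
  linarith [hd]

lemma pOf_psi (he : 0 < e) (hl : 0 < ℓ) (p : ℕ) (φ : ℤ) (hp : 1 ≤ p ∧ p ≤ ℓ) :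
    pOf e ℓ (psi e ℓ p φ) = p := by
  have he0 : (0:ℤ) < (e:ℤ) := by exact_mod_cast he
  have h0 : 0 ≤ (φ - 1).emod (e:ℤ) := Int.emod_nonneg _ (ne_of_gt he0)
  have h1 : (φ - 1).emod (e:ℤ) < (e:ℤ) := Int.emod_lt_of_pos _ he0
  exact pOf_decomp he hl _ p _ ⟨by omega, by omega⟩ hp

lemma phiOf_psi (he : 0 < e) (hl : 0 < ℓ) (p : ℕ) (φ : ℤ) (hp : 1 ≤ p ∧ p ≤ ℓ) :
    phiOf e ℓ (psi e ℓ p φ) = φ := by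
  have he0 : (0:ℤ) < (e:ℤ) := by exact_mod_cast he
  have h0 : 0 ≤ (φ - 1).emod (e:ℤ) := Int.emod_nonneg _ (ne_of_gt he0)
  have h1 : (φ - 1).emod (e:ℤ) < (e:ℤ) := Int.emod_lt_of_pos _ he0
  rw [psi, phiOf_decomp he hl _ p _ ⟨by omega, by omega⟩ hp]
  have h2 : (φ - 1).emod (e:ℤ) + (e:ℤ) * ((φ - 1).ediv (e:ℤ)) = φ - 1 :=
    Int.emod_add_mul_ediv _ _
  linarith

lemma phiOf_lt (he : 0 < e) (hl : 0 < ℓ) {x y : ℤ} (hp : pOf e ℓ x = pOf e ℓ y)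
    (h : x < y) : phiOf e ℓ x < phiOf e ℓ y := by
  obtain ⟨cx, rx, hcx, hpx, hdx, hphix⟩ := exists_decomp he hl x
  obtain ⟨cy, ry, hcy, hpy, hdy, hphiy⟩ := exists_decomp he hl y
  have he1 : (1:ℤ) ≤ (e:ℤ) := by exact_mod_cast he
  have hl1 : (1:ℤ) ≤ (ℓ:ℤ) := by exact_mod_cast hl
  have hE : (e:ℤ) ≤ (e:ℤ) * ℓ := by nlinarith
  rw [hp] at hdx
  rw [hphix, hphiy]
  rcases lt_trichotomy rx ry with hr | hr | hr
  · have : (e:ℤ) * (rx + 1) ≤ (e:ℤ) * ry := by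
      apply mul_le_mul_of_nonneg_left (by omega) (by omega)
    nlinarith
  · subst hr
    have : cx < cy := by nlinarith
    nlinarith
  · exfalso
    have : (e:ℤ) * ℓ * (ry + 1) ≤ (e:ℤ) * ℓ * rx := by
      apply mul_le_mul_of_nonneg_left (by omega) (by positivity)
    nlinarith

lemma psi_lt_psi (he : 0 < e) (hl : 0 < ℓ) (p : ℕ) (hp : 1 ≤ p ∧ p ≤ ℓ) {φ φ' : ℤ}
    (h : φ < φ') : psi e ℓ p φ < psi e ℓ p φ' := by
  rcases lt_trichotomy (psi e ℓ p φ) (psi e ℓ p φ') with h1 | h1 | h1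
  · exact h1
  · exfalso
    have := congrArg (phiOf e ℓ) h1
    rw [phiOf_psi he hl p φ hp, phiOf_psi he hl p φ' hp] at this
    omega
  · exfalso
    have := phiOf_lt he hl (by rw [pOf_psi he hl p φ hp, pOf_psi he hl p φ' hp]) h1
    rw [phiOf_psi he hl p φ hp, phiOf_psi he hl p φ' hp] at this
    omega

/-- Part 1 of the statement. -/
lemma part1 (he : 0 < e) (hl : 0 < ℓ) (a : ℤ) :
    ∃! x : ℤ × ℤ × ℤ,
      (1 ≤ x.1 ∧ x.1 ≤ (e : ℤ)) ∧ (1 ≤ x.2.1 ∧ x.2.1 ≤ (ℓ : ℤ)) ∧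
        a = x.1 + (e : ℤ) * (x.2.1 - 1) + (e : ℤ) * (ℓ : ℤ) * x.2.2 ∧
        x.2.1 = (pOf e ℓ a : ℤ) ∧ phiOf e ℓ a = x.1 + (e : ℤ) * x.2.2 := by
  obtain ⟨c, r, hc, hp, hd, hphi⟩ := exists_decomp he hl a
  refine ⟨(c, ((pOf e ℓ a : ℕ) : ℤ), r),
    ⟨hc, ⟨(by exact_mod_cast hp.1 : (1:ℤ) ≤ ((pOf e ℓ a : ℕ):ℤ)),
      (by exact_mod_cast hp.2 : ((pOf e ℓ a : ℕ):ℤ) ≤ (ℓ:ℤ))⟩, hd, rfl, hphi⟩, ?_⟩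
  rintro ⟨c', p', r'⟩ ⟨hc', hp', hd', hpe', hphi'⟩
  simp only at hc' hp' hd' hpe' hphi' ⊢
  have hE : (0:ℤ) < (e:ℤ) * ℓ := by positivity
  have h1 : c' + (e:ℤ) * ℓ * r' = c + (e:ℤ) * ℓ * r := by
    rw [hpe'] at hd'
    linarith [hd, hd']
  have h2 : c' = c := by
    have hdvd : ((e:ℤ) * ℓ) ∣ (c' - c) := ⟨r - r', by linarith⟩
    have : c' - c = 0 := Int.eq_zero_of_abs_lt_dvd hdvd (by
      rw [abs_lt]; constructor <;> nlinarith [hc.1, hc.2, hc'.1, hc'.2])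
    omega
  have h3 : r' = r := by
    have : (e:ℤ) * ℓ * r' = (e:ℤ) * ℓ * r := by omega
    exact mul_left_cancel₀ (ne_of_gt hE) this
  exact Prod.ext h2 (Prod.ext hpe' h3)


/-! ### Generic list lemmas -/

lemma sum_range_eq_list (n : ℕ) (f : ℕ → ℕ) :
    ∑ i ∈ Finset.range n, f i = ((List.range n).map f).sum := rfl

lemma length_flatMap_range (f : ℕ → List ℤ) (k : ℕ) :
    ((List.range k).flatMap f).length = ∑ i ∈ Finset.range k, (f i).length := by
  rw [List.length_flatMap, sum_range_eq_list]

lemma range_split {q n : ℕ} (hq : q < n) :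
    List.range n = List.range q ++ q :: ((List.range (n - q - 1)).map (q + 1 + ·)) := by
  have h1 : n = (q + 1) + (n - q - 1) := by omega
  conv_lhs => rw [h1]
  rw [List.range_add, List.range_succ]
  simp

lemma getD_flatMap (f : ℕ → List ℤ) {n q j : ℕ} (hq : q < n)
    (h1 : ∑ i ∈ Finset.range q, (f i).length ≤ j)
    (h2 : j < ∑ i ∈ Finset.range q, (f i).length + (f q).length) :
    ((List.range n).flatMap f).getD j 0
      = (f q).getD (j - ∑ i ∈ Finset.range q, (f i).length) 0 := by
  rw [range_split hq, List.flatMap_append, List.flatMap_cons]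
  rw [List.getD_append_right _ _ _ _ (by rw [length_flatMap_range]; exact h1)]
  rw [length_flatMap_range]
  rw [List.getD_append _ _ _ _ (by omega)]

lemma drop_take_flatMap (f : ℕ → List ℤ) {n q : ℕ} (hq : q < n) :
    ((((List.range n).flatMap f).drop (∑ i ∈ Finset.range q, (f i).length)).take
      (f q).length) = f q := by
  rw [range_split hq, List.flatMap_append, List.flatMap_cons,
    ← length_flatMap_range f q, List.drop_left, List.take_left]

lemma exists_block (g : ℕ → ℕ) {n j : ℕ} (hj : j < ∑ i ∈ Finset.range n, g i) :
    ∃ q < n, ∑ i ∈ Finset.range q, g i ≤ j ∧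
      j < ∑ i ∈ Finset.range q, g i + g q := by
  induction n with
  | zero => simp at hj
  | succ n ih =>
    by_cases h : j < ∑ i ∈ Finset.range n, g i
    · obtain ⟨q, hq, h1, h2⟩ := ih h
      exact ⟨q, by omega, h1, h2⟩
    · refine ⟨n, by omega, by omega, ?_⟩
      rw [Finset.sum_range_succ] at hj
      omega

lemma ofFn_getD {m : ℕ} (L : List ℤ) (h : L.length = m) :
    List.ofFn (fun j : Fin m => L.getD (j : ℕ) 0) = L := by
  apply List.ext_getElem (by simp [h])
  intro n h1 h2
  rw [List.getElem_ofFn]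
  exact List.getD_eq_getElem L 0 h2

lemma card_filter_eq_countP {m : ℕ} (a : Fin m → ℤ) (P : ℤ → Prop) [DecidablePred P] :
    (Finset.univ.filter fun i => P (a i)).card = (List.ofFn a).countP (fun x => decide (P x)) := by
  rw [List.ofFn_eq_map, List.countP_map, List.countP_eq_length_filter]
  have h : Finset.univ.filter (fun i => P (a i))
      = ⟨((List.finRange m).filter (fun i => decide (P (a i)))),
        ((List.nodup_finRange m).filter _)⟩ := by
    ext i; change i ∈ Finset.univ.filter (fun i => P (a i)) ↔ i ∈ (((List.finRange m).filter (fun i => decide (P (a i))) : List (Fin m)) : Multiset (Fin m)); simp [List.mem_filter, List.mem_finRange]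
  rw [h]
  simp [Finset.card]
  rfl

lemma sum_rev {n : ℕ} (f : Fin n → ℕ) : ∑ i : Fin n, f (Fin.rev i) = ∑ i : Fin n, f i :=
  Fintype.sum_equiv (Fin.revPerm) _ _ (fun _ => rfl)

/-- `bStart` as a sum over `Finset.range`. -/
lemma bStart_eq {ℓ : ℕ} (μ : Fin ℓ → ℕ) (Q : Fin ℓ) :
    bStart ℓ μ Q = ∑ i ∈ Finset.range (Q : ℕ), (if h : i < ℓ then μ ⟨i, h⟩ else 0) := by
  rw [bStart]
  refine Finset.sum_nbij' (fun q' => (q' : ℕ)) (fun i => if h : i < ℓ then ⟨i, h⟩ else Q)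
    ?_ ?_ ?_ ?_ ?_
  · intro a ha
    simp only [Finset.mem_filter, Finset.mem_univ, true_and] at ha
    simp only [Finset.mem_range]
    exact ha
  · intro i hi
    simp only [Finset.mem_range] at hi
    have hlt : i < ℓ := lt_trans hi Q.isLt
    simp only [Finset.mem_filter, Finset.mem_univ, true_and, dif_pos hlt]
    exact hi
  · intro a _; simp [a.isLt]
  · intro i hi
    simp only [Finset.mem_range] at hi
    simp [lt_trans hi Q.isLt]
  · intro a ha
    simp [a.isLt]


/-! ### Blocks of the `phiList` -/

/-- The `q`-th block (`q = 0,…,ℓ-1`, class `p = ℓ - q`). -/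
def blocksOf (e ℓ : ℕ) (L : List ℤ) (q : ℕ) : List ℤ :=
  (L.filter fun x => pOf e ℓ x = ℓ - q).map (phiOf e ℓ)

variable {m : ℕ}

lemma phiList_eq (a : Fin m → ℤ) :
    phiList e ℓ m a = (List.range ℓ).flatMap (blocksOf e ℓ (List.ofFn a)) := by
  rw [phiList, List.flatMap_def, List.flatMap_def]
  have hrev : (List.range ℓ).reverse = (List.range ℓ).map (fun q => ℓ - 1 - q) := by
    apply List.ext_getElem (by simp)
    intro n h1 h2
    simp only [List.getElem_reverse, List.getElem_map, List.getElem_range, List.length_range]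
  rw [hrev, List.map_map]
  refine congrArg _ (List.map_congr_left ?_)
  intro q hq
  rw [List.mem_range] at hq
  have h : ℓ - 1 - q + 1 = ℓ - q := by omega
  simp only [Function.comp, h, blocksOf]

lemma blocksOf_length (a : Fin m → ℤ) {q : ℕ} (hq : q < ℓ) :
    (blocksOf e ℓ (List.ofFn a) q).length = nuOf e ℓ m a (Fin.rev ⟨q, hq⟩) := by
  rw [blocksOf, List.length_map, ← List.countP_eq_length_filter, nuOf,
    card_filter_eq_countP a (fun x => pOf e ℓ x = ((Fin.rev ⟨q, hq⟩ : Fin ℓ) : ℕ) + 1)]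
  have h : ((Fin.rev ⟨q, hq⟩ : Fin ℓ) : ℕ) + 1 = ℓ - q := by
    simp only [Fin.val_rev]
    omega
  simp only [h]

lemma blocksOf_pairwise (he : 0 < e) (hl : 0 < ℓ) {L : List ℤ}
    (hL : L.Pairwise (· > ·)) (q : ℕ) : (blocksOf e ℓ L q).Pairwise (· > ·) := by
  rw [blocksOf, List.pairwise_map]
  refine List.Pairwise.imp_of_mem ?_ (hL.filter _)
  intro x y hx hy hxy
  rw [List.mem_filter, decide_eq_true_eq] at hx hy
  exact phiOf_lt he hl (hy.2.trans hx.2.symm) hxy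

lemma sum_nuOf (he : 0 < e) (hl : 0 < ℓ) (a : Fin m → ℤ) :
    ∑ p, nuOf e ℓ m a p = m := by
  have hF : ∀ i, pOf e ℓ (a i) - 1 < ℓ := fun i => by
    have := pOf_bounds he hl (a i); omega
  set F : Fin m → Fin ℓ := fun i => ⟨pOf e ℓ (a i) - 1, hF i⟩ with hFdef
  have h := Finset.card_eq_sum_card_fiberwise
    (f := F) (s := Finset.univ) (t := Finset.univ) (fun _ _ => Finset.mem_univ _)
  rw [Finset.card_univ, Fintype.card_fin] at h
  conv_rhs => rw [h]
  refine Finset.sum_congr rfl fun p _ => ?_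
  rw [nuOf]
  congr 1
  apply Finset.filter_congr
  intro i _
  have hb := pOf_bounds he hl (a i)
  simp only [hFdef, Fin.ext_iff]
  constructor
  · intro hh; omega
  · intro hh; omega


lemma pairwise_getD {L : List ℤ} (hL : L.Pairwise (· > ·)) {i j : ℕ}
    (hij : i < j) (hj : j < L.length) : L.getD j 0 < L.getD i 0 := by
  rw [List.getD_eq_getElem L 0 hj, List.getD_eq_getElem L 0 (hij.trans hj)]
  exact List.pairwise_iff_getElem.mp hL i j (hij.trans hj) hj hij

lemma mapsTo_f (he : 0 < e) (hl : 0 < ℓ) :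
    Set.MapsTo (bijMap e ℓ m) {a : Fin m → ℤ | StrictAnti a}
      {x : (Fin ℓ → ℕ) × (Fin m → ℤ) |
        (∑ p, x.1 p = m) ∧
        (∀ i j : Fin m, (i : ℕ) < (j : ℕ) →
          sameBlk ℓ m (fun q : Fin ℓ => x.1 (Fin.rev q)) i j → x.2 j < x.2 i)} := by
  intro a ha
  simp only [Set.mem_setOf_eq] at ha ⊢
  refine ⟨sum_nuOf he hl a, ?_⟩
  rintro i j hij ⟨Q, hQi, hQj⟩
  have hL : (List.ofFn a).Pairwise (· > ·) :=
    List.pairwise_ofFn.mpr (fun i j h => ha h)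
  set f : ℕ → List ℤ := blocksOf e ℓ (List.ofFn a) with hf
  have hS : bStart ℓ (fun q => (bijMap e ℓ m a).1 (Fin.rev q)) Q
      = ∑ i ∈ Finset.range (Q : ℕ), (f i).length := by
    rw [bStart_eq]
    refine Finset.sum_congr rfl fun i hi => ?_
    rw [Finset.mem_range] at hi
    have hiℓ : i < ℓ := lt_trans hi Q.isLt
    rw [dif_pos hiℓ, hf, blocksOf_length a hiℓ]
    rfl
  have hμ : (bijMap e ℓ m a).1 (Fin.rev Q) = (f (Q : ℕ)).length := by
    rw [hf, blocksOf_length a Q.isLt]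
    rfl
  rw [hS] at hQi hQj
  simp only [hμ] at hQi hQj
  have hgetD : ∀ k : Fin m, (∑ i ∈ Finset.range (Q : ℕ), (f i).length ≤ (k : ℕ)) →
      ((k : ℕ) < ∑ i ∈ Finset.range (Q : ℕ), (f i).length + (f (Q : ℕ)).length) →
      (bijMap e ℓ m a).2 k
        = (f (Q : ℕ)).getD ((k : ℕ) - ∑ i ∈ Finset.range (Q : ℕ), (f i).length) 0 := by
    intro k h1 h2
    show (phiList e ℓ m a).getD (k : ℕ) 0 = _
    rw [phiList_eq, getD_flatMap f Q.isLt h1 h2]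
  rw [hgetD i hQi.1 hQi.2, hgetD j hQj.1 hQj.2]
  have hpw : (f (Q : ℕ)).Pairwise (· > ·) := blocksOf_pairwise he hl hL _
  refine pairwise_getD hpw (by omega) (by omega)


/-! ### The inverse map -/

def nuo (ℓ : ℕ) {m : ℕ} (x : (Fin ℓ → ℕ) × (Fin m → ℤ)) (q : ℕ) : ℕ :=
  if h : q < ℓ then x.1 (Fin.rev ⟨q, h⟩) else 0

def Ssum (ℓ : ℕ) {m : ℕ} (x : (Fin ℓ → ℕ) × (Fin m → ℤ)) (q : ℕ) : ℕ :=
  ∑ i ∈ Finset.range q, nuo ℓ x i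

def blockSeg (ℓ : ℕ) {m : ℕ} (x : (Fin ℓ → ℕ) × (Fin m → ℤ)) (q : ℕ) : List ℤ :=
  ((List.ofFn x.2).drop (Ssum ℓ x q)).take (nuo ℓ x q)

def preList (e ℓ : ℕ) {m : ℕ} (x : (Fin ℓ → ℕ) × (Fin m → ℤ)) : List ℤ :=
  (List.range ℓ).flatMap fun q => (blockSeg ℓ x q).map (psi e ℓ (ℓ - q))

def invMap (e ℓ m : ℕ) (x : (Fin ℓ → ℕ) × (Fin m → ℤ)) : Fin m → ℤ :=
  fun i => (List.insertionSort (· ≥ ·) (preList e ℓ x)).getD (i : ℕ) 0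

lemma phiList_length (he : 0 < e) (hl : 0 < ℓ) (a : Fin m → ℤ) :
    (phiList e ℓ m a).length = m := by
  rw [phiList_eq, length_flatMap_range]
  have h1 : ∑ i ∈ Finset.range ℓ, (blocksOf e ℓ (List.ofFn a) i).length
      = ∑ i : Fin ℓ, (blocksOf e ℓ (List.ofFn a) (i : ℕ)).length :=
    (Fin.sum_univ_eq_sum_range _ _).symm
  rw [h1]
  have h2 : ∀ i : Fin ℓ, (blocksOf e ℓ (List.ofFn a) (i : ℕ)).length
      = nuOf e ℓ m a (Fin.rev i) := fun i => blocksOf_length a i.isLt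
  rw [Finset.sum_congr rfl fun i _ => h2 i, sum_rev (fun i => nuOf e ℓ m a i),
    sum_nuOf he hl a]

/-- Left inverse: `invMap ∘ bijMap = id` on strictly decreasing tuples. -/
lemma left_inv (he : 0 < e) (hl : 0 < ℓ) (a : Fin m → ℤ) (ha : StrictAnti a) :
    invMap e ℓ m (bijMap e ℓ m a) = a := by
  set L := List.ofFn a with hLdef
  set x := bijMap e ℓ m a with hxdef
  have hL : L.Pairwise (· > ·) := List.pairwise_ofFn.mpr (fun i j h => ha h)
  have hofn : List.ofFn x.2 = phiList e ℓ m a := ofFn_getD _ (phiList_length he hl a)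
  have hnuo : ∀ q (hq : q < ℓ), nuo ℓ x q = (blocksOf e ℓ L q).length := by
    intro q hq
    rw [nuo, dif_pos hq, blocksOf_length a hq]
    rfl
  have hSs : ∀ q, q < ℓ → Ssum ℓ x q = ∑ i ∈ Finset.range q, (blocksOf e ℓ L i).length := by
    intro q hq
    exact Finset.sum_congr rfl fun i hi =>
      hnuo i (lt_trans (Finset.mem_range.mp hi) hq)
  have hseg : ∀ q (hq : q < ℓ), blockSeg ℓ x q = blocksOf e ℓ L q := by
    intro q hq
    rw [blockSeg, hofn, phiList_eq, hnuo q hq, hSs q hq]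
    exact drop_take_flatMap _ hq
  have hblock : ∀ q (hq : q < ℓ), (blockSeg ℓ x q).map (psi e ℓ (ℓ - q))
      = L.filter fun z => pOf e ℓ z = ℓ - q := by
    intro q hq
    rw [hseg q hq, blocksOf, List.map_map]
    have : ∀ z ∈ L.filter fun z => pOf e ℓ z = ℓ - q,
        (psi e ℓ (ℓ - q) ∘ phiOf e ℓ) z = id z := by
      intro z hz
      rw [List.mem_filter, decide_eq_true_eq] at hz
      simp only [Function.comp, id_eq, ← hz.2, psi_pOf_phiOf he hl]
    rw [List.map_congr_left this, List.map_id]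
  have hperm : (preList e ℓ x).Perm L := by
    rw [List.perm_iff_count]
    intro z
    have hc : List.count z (preList e ℓ x)
        = ∑ q ∈ Finset.range ℓ, List.count z (L.filter fun w => pOf e ℓ w = ℓ - q) := by
      rw [preList, List.count_flatMap, sum_range_eq_list]
      refine congrArg _ (List.map_congr_left ?_)
      intro q hq
      rw [List.mem_range] at hq
      simp only [Function.comp]
      rw [hblock q hq]
    rw [hc]
    have hb := pOf_bounds he hl z
    have hcf : ∀ q ∈ Finset.range ℓ, List.count z (L.filter fun w => pOf e ℓ w = ℓ - q)
        = if q = ℓ - pOf e ℓ z then List.count z L else 0 := by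
      intro q hq
      rw [Finset.mem_range] at hq
      by_cases h : pOf e ℓ z = ℓ - q
      · rw [List.count_filter (by simpa using h), if_pos (by omega)]
      · rw [if_neg (by omega)]
        rw [List.count_eq_zero]
        intro hmem
        rw [List.mem_filter, decide_eq_true_eq] at hmem
        exact h hmem.2
    rw [Finset.sum_congr rfl hcf, Finset.sum_ite_eq' (Finset.range ℓ) (ℓ - pOf e ℓ z),
      if_pos (Finset.mem_range.mpr (by omega))]
  have hsort : List.insertionSort (· ≥ ·) (preList e ℓ x) = L := by
    refine (fun hp h1 h2 => List.Perm.eq_of_pairwise' h1 h2 hp)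
      ((List.perm_insertionSort _ _).trans hperm)
      (List.pairwise_insertionSort _ _) ?_
    exact hL.imp (fun h => le_of_lt h)
  funext i
  rw [invMap]
  show (List.insertionSort (· ≥ ·) (preList e ℓ x)).getD (i : ℕ) 0 = a i
  rw [hsort, hLdef, List.getD_eq_getElem _ _ (by rw [List.length_ofFn]; exact i.isLt),
    List.getElem_ofFn]


/-- Right inverse and membership: the key lemma on the target side. -/
lemma right_inv (he : 0 < e) (hl : 0 < ℓ) (x : (Fin ℓ → ℕ) × (Fin m → ℤ))
    (hx1 : ∑ p, x.1 p = m)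
    (hx2 : ∀ i j : Fin m, (i : ℕ) < (j : ℕ) →
      sameBlk ℓ m (fun q : Fin ℓ => x.1 (Fin.rev q)) i j → x.2 j < x.2 i) :
    StrictAnti (invMap e ℓ m x) ∧ bijMap e ℓ m (invMap e ℓ m x) = x := by
  have hsum : ∑ q ∈ Finset.range ℓ, nuo ℓ x q = m := by
    rw [← Fin.sum_univ_eq_sum_range (nuo ℓ x) ℓ]
    have h2 : ∀ q : Fin ℓ, nuo ℓ x (q : ℕ) = x.1 (Fin.rev q) := fun q => by
      rw [nuo, dif_pos q.isLt]
    rw [Finset.sum_congr rfl fun q _ => h2 q, sum_rev (fun q => x.1 q), hx1]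
  have hSle : ∀ q, q < ℓ → Ssum ℓ x q + nuo ℓ x q ≤ m := by
    intro q hq
    have h1 : Ssum ℓ x q + nuo ℓ x q = ∑ i ∈ Finset.range (q+1), nuo ℓ x i :=
      (Finset.sum_range_succ _ _).symm
    have h3 := Finset.sum_le_sum_of_subset (f := nuo ℓ x)
      (Finset.range_subset_range.mpr (show q + 1 ≤ ℓ by omega))
    omega
  have hseglen : ∀ q, q < ℓ → (blockSeg ℓ x q).length = nuo ℓ x q := by
    intro q hq
    rw [blockSeg, List.length_take, List.length_drop, List.length_ofFn]
    have := hSle q hq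
    omega
  have hSb : ∀ Q : Fin ℓ, bStart ℓ (fun q => x.1 (Fin.rev q)) Q = Ssum ℓ x (Q : ℕ) := by
    intro Q
    rw [bStart_eq]
    rfl
  have hgetseg : ∀ q, q < ℓ → ∀ t (ht : t < nuo ℓ x q) (htm : Ssum ℓ x q + t < m),
      (blockSeg ℓ x q).getD t 0 = x.2 ⟨Ssum ℓ x q + t, htm⟩ := by
    intro q hq t ht htm
    have hlt : t < (blockSeg ℓ x q).length := by rw [hseglen q hq]; exact ht
    rw [List.getD_eq_getElem _ _ hlt]
    simp only [blockSeg] at hlt ⊢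
    rw [List.getElem_take, List.getElem_drop, List.getElem_ofFn]
  have hsegpw : ∀ q, q < ℓ → (blockSeg ℓ x q).Pairwise (· > ·) := by
    intro q hq
    rw [List.pairwise_iff_getElem]
    intro t t' h1 h2 htt
    rw [hseglen q hq] at h1 h2
    have hm1 : Ssum ℓ x q + t < m := by have := hSle q hq; omega
    have hm2 : Ssum ℓ x q + t' < m := by have := hSle q hq; omega
    have e1 : (blockSeg ℓ x q)[t] = x.2 ⟨Ssum ℓ x q + t, hm1⟩ := by
      rw [← List.getD_eq_getElem _ 0 (by rw [hseglen q hq]; exact h1),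
        hgetseg q hq t h1 hm1]
    have e2 : (blockSeg ℓ x q)[t'] = x.2 ⟨Ssum ℓ x q + t', hm2⟩ := by
      rw [← List.getD_eq_getElem _ 0 (by rw [hseglen q hq]; exact h2),
        hgetseg q hq t' h2 hm2]
    rw [e1, e2]
    refine hx2 _ _ (by simp; omega) ⟨⟨q, hq⟩, ?_, ?_⟩
    · constructor
      · rw [hSb ⟨q, hq⟩]; simp
      · rw [hSb ⟨q, hq⟩]
        have : x.1 (Fin.rev ⟨q, hq⟩) = nuo ℓ x q := by rw [nuo, dif_pos hq]
        simp only [this]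
        simp; omega
    · constructor
      · rw [hSb ⟨q, hq⟩]; simp
      · rw [hSb ⟨q, hq⟩]
        have : x.1 (Fin.rev ⟨q, hq⟩) = nuo ℓ x q := by rw [nuo, dif_pos hq]
        simp only [this]
        simp; omega
  set f : ℕ → List ℤ := fun q => (blockSeg ℓ x q).map (psi e ℓ (ℓ - q)) with hfdef
  have hpre : preList e ℓ x = (List.range ℓ).flatMap f := rfl
  have hfpw : ∀ q, q < ℓ → (f q).Pairwise (· > ·) := by
    intro q hq
    rw [hfdef]
    rw [List.pairwise_map]
    exact (hsegpw q hq).imp fun h => psi_lt_psi he hl (ℓ - q) ⟨by omega, by omega⟩ h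
  have hfmem : ∀ q, q < ℓ → ∀ y ∈ f q, pOf e ℓ y = ℓ - q := by
    intro q hq y hy
    rw [hfdef] at hy
    obtain ⟨φ, _, rfl⟩ := List.mem_map.mp hy
    exact pOf_psi he hl _ _ ⟨by omega, by omega⟩
  have hflen : ∀ q, q < ℓ → (f q).length = nuo ℓ x q := by
    intro q hq
    rw [hfdef]
    simp only [List.length_map]
    exact hseglen q hq
  have hTlen : (preList e ℓ x).length = m := by
    rw [hpre, length_flatMap_range,
      Finset.sum_congr rfl (fun i hi => hflen i (Finset.mem_range.mp hi)), hsum]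
  have hTpw : (preList e ℓ x).Pairwise (· ≠ ·) := by
    rw [hpre, List.pairwise_flatMap]
    constructor
    · intro q hq
      exact (hfpw q (List.mem_range.mp hq)).imp fun h => ne_of_gt h
    · refine (List.pairwise_lt_range (n := ℓ)).imp_of_mem ?_
      intro q q' hq hq' hlt y hy y' hy'
      rw [List.mem_range] at hq hq'
      have h1 := hfmem q hq y hy
      have h2 := hfmem q' hq' y' hy'
      intro hyy
      rw [hyy] at h1
      omega
  set sT := List.insertionSort (· ≥ ·) (preList e ℓ x) with hsTdef
  have hsTperm : sT.Perm (preList e ℓ x) := List.perm_insertionSort _ _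
  have hsTlen : sT.length = m := hsTperm.length_eq.trans hTlen
  have hsTpw : sT.Pairwise (· > ·) := by
    have h1 : sT.Pairwise (· ≥ ·) := List.pairwise_insertionSort _ _
    have h2 : sT.Pairwise (· ≠ ·) := hsTperm.nodup_iff.mpr hTpw
    exact (h1.and h2).imp fun h => lt_of_le_of_ne h.1 h.2.symm
  have hanti : StrictAnti (invMap e ℓ m x) := by
    intro i j hij
    exact pairwise_getD hsTpw hij (by rw [hsTlen]; exact j.isLt)
  refine ⟨hanti, ?_⟩
  have hofn : List.ofFn (invMap e ℓ m x) = sT := ofFn_getD _ hsTlen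
  have hnu : nuOf e ℓ m (invMap e ℓ m x) = x.1 := by
    funext p
    rw [nuOf, card_filter_eq_countP (invMap e ℓ m x) (fun z => pOf e ℓ z = (p : ℕ) + 1),
      hofn, List.Perm.countP_eq _ hsTperm, hpre, List.countP_flatMap,
      ← sum_range_eq_list]
    have hterm : ∀ q ∈ Finset.range ℓ,
        (List.countP (fun z => decide (pOf e ℓ z = (p : ℕ) + 1)) ∘ f) q
          = if q = ℓ - 1 - (p : ℕ) then nuo ℓ x q else 0 := by
      intro q hq
      rw [Finset.mem_range] at hq
      have hp := p.isLt
      simp only [Function.comp]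
      by_cases h : ℓ - q = (p : ℕ) + 1
      · rw [if_pos (by omega), ← hflen q hq]
        apply List.countP_eq_length.mpr
        intro z hz
        have := hfmem q hq z hz
        simp only [decide_eq_true_eq]
        omega
      · rw [if_neg (by omega)]
        apply List.countP_eq_zero.mpr
        intro z hz
        have := hfmem q hq z hz
        simp only [decide_eq_true_eq]
        omega
    rw [Finset.sum_congr rfl hterm, Finset.sum_ite_eq' (Finset.range ℓ) (ℓ - 1 - (p : ℕ)),
      if_pos (Finset.mem_range.mpr (by omega))]
    rw [nuo, dif_pos (show ℓ - 1 - (p : ℕ) < ℓ by omega)]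
    have hrev : (Fin.rev ⟨ℓ - 1 - (p : ℕ), by omega⟩ : Fin ℓ) = p := by
      apply Fin.ext
      rw [Fin.val_rev]
      show ℓ - (ℓ - 1 - (p : ℕ) + 1) = (p : ℕ)
      have := p.isLt
      omega
    rw [hrev]
  have hC1 : ∀ q, q < ℓ → sT.filter (fun z => pOf e ℓ z = ℓ - q) = f q := by
    intro q hq
    refine (fun hp h1 h2 => List.Perm.eq_of_pairwise' (r := (· ≥ ·)) h1 h2 hp) ?_ ?_ ?_
    · refine (hsTperm.filter _).trans ?_
      rw [hpre, range_split hq, List.flatMap_append, List.flatMap_cons,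
        List.filter_append, List.filter_append]
      have hA : ((List.range q).flatMap f).filter (fun z => pOf e ℓ z = ℓ - q) = [] := by
        rw [List.filter_eq_nil_iff]
        intro y hy
        obtain ⟨q', hq', hy'⟩ := List.mem_flatMap.mp hy
        rw [List.mem_range] at hq'
        have := hfmem q' (lt_trans hq' hq) y hy'
        simp only [decide_eq_true_eq]
        omega
      have hB : (((List.range (ℓ - q - 1)).map (q + 1 + ·)).flatMap f).filter
          (fun z => pOf e ℓ z = ℓ - q) = [] := by
        rw [List.filter_eq_nil_iff]
        intro y hy
        obtain ⟨q'', hq'', hy'⟩ := List.mem_flatMap.mp hy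
        obtain ⟨t, ht, rfl⟩ := List.mem_map.mp hq''
        rw [List.mem_range] at ht
        have := hfmem (q + 1 + t) (by omega) y hy'
        simp only [decide_eq_true_eq]
        omega
      have hQ : (f q).filter (fun z => pOf e ℓ z = ℓ - q) = f q :=
        List.filter_eq_self.mpr (fun y hy => by simp [hfmem q hq y hy])
      rw [hA, hB, hQ]
      simp
    · exact (hsTpw.filter _).imp fun h => le_of_lt h
    · exact (hfpw q hq).imp fun h => le_of_lt h
  have hphiL : phiList e ℓ m (invMap e ℓ m x) = (List.range ℓ).flatMap (blockSeg ℓ x) := by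
    rw [phiList_eq, List.flatMap_def, List.flatMap_def]
    refine congrArg _ (List.map_congr_left ?_)
    intro q hq
    rw [List.mem_range] at hq
    rw [blocksOf, hofn, hC1 q hq, hfdef]
    simp only [List.map_map]
    have : ∀ φ ∈ blockSeg ℓ x q, (phiOf e ℓ ∘ psi e ℓ (ℓ - q)) φ = id φ := by
      intro φ _
      simp only [Function.comp, id_eq]
      exact phiOf_psi he hl _ _ ⟨by omega, by omega⟩
    rw [List.map_congr_left this, List.map_id]
  have hx2eq : (fun j : Fin m => (phiList e ℓ m (invMap e ℓ m x)).getD (j : ℕ) 0) = x.2 := by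
    funext j
    have hj : (j : ℕ) < ∑ i ∈ Finset.range ℓ, nuo ℓ x i := by rw [hsum]; exact j.isLt
    obtain ⟨q, hq, h1, h2⟩ := exists_block (nuo ℓ x) hj
    have hSdef : Ssum ℓ x q = ∑ i ∈ Finset.range q, nuo ℓ x i := rfl
    rw [← hSdef] at h1 h2
    have hs1 : ∑ i ∈ Finset.range q, (blockSeg ℓ x i).length = Ssum ℓ x q :=
      Finset.sum_congr rfl fun i hi => hseglen i (lt_trans (Finset.mem_range.mp hi) hq)
    rw [hphiL, getD_flatMap (blockSeg ℓ x) hq (by rw [hs1]; exact h1)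
      (by rw [hs1, hseglen q hq]; exact h2)]
    rw [hs1, hgetseg q hq ((j : ℕ) - Ssum ℓ x q) (by omega) (by omega)]
    have hfin : (⟨Ssum ℓ x q + ((j : ℕ) - Ssum ℓ x q), by omega⟩ : Fin m) = j := by
      apply Fin.ext
      simp only []
      omega
    rw [hfin]
  rw [bijMap]
  exact Prod.ext hnu hx2eq

end A713

/-- (A.7): writing each `a ∈ ℤ` uniquely as `a = c_a + e(p_a-1) + eℓ r_a` with
`c_a ∈ {1,…,e}`, `p_a ∈ {1,…,ℓ}`, `r_a ∈ ℤ`, and setting `φ_a = c_a + e r_a`,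
the assignment `α̲ ↦ (ν, α)` — where `ν ∈ 𝒞_{m,ℓ}` records the multiset of
values `p_{a_i}` and `α` lists the `φ_{a_i}` regrouped by the minimal
permutation sorting the `p`-values into `(ℓ^{ν_ℓ},…,2^{ν_2},1^{ν_1})` — is a
bijection from strictly decreasing `m`-tuples of integers onto
`⊔_ν ℤ^{ν°}_{>0} × {ν}`, where `ℤ^{ν°}_{>0}` consists of the tuples strictly
decreasing within each block of the reversed composition `ν° = (ν_ℓ,…,ν_1)`. -/
theorem stmt_13 (e ℓ m : ℕ) (he : 1 < e) (hℓ : 0 < ℓ) (hm : 0 < m) :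
    (∀ a : ℤ, ∃! x : ℤ × ℤ × ℤ,
      (1 ≤ x.1 ∧ x.1 ≤ (e : ℤ)) ∧ (1 ≤ x.2.1 ∧ x.2.1 ≤ (ℓ : ℤ)) ∧
        a = x.1 + (e : ℤ) * (x.2.1 - 1) + (e : ℤ) * (ℓ : ℤ) * x.2.2 ∧
        x.2.1 = (pOf e ℓ a : ℤ) ∧ phiOf e ℓ a = x.1 + (e : ℤ) * x.2.2) ∧
    Set.BijOn (bijMap e ℓ m)
      {a : Fin m → ℤ | StrictAnti a}
      {x : (Fin ℓ → ℕ) × (Fin m → ℤ) |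
        (∑ p, x.1 p = m) ∧
        -- strictly decreasing within each block of the reversed composition ν°
        (∀ i j : Fin m, (i : ℕ) < (j : ℕ) →
          sameBlk ℓ m (fun q : Fin ℓ => x.1 (Fin.rev q)) i j → x.2 j < x.2 i)} := by
  have he0 : 0 < e := by omega
  constructor
  · exact fun a => A713.part1 he0 hℓ a
  · refine Set.InvOn.bijOn (f' := A713.invMap e ℓ m) ⟨?_, ?_⟩ (A713.mapsTo_f he0 hℓ) ?_
    · intro a ha
      exact A713.left_inv he0 hℓ a ha
    · intro x hx
      exact (A713.right_inv he0 hℓ x hx.1 hx.2).2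
    · intro x hx
      exact (A713.right_inv he0 hℓ x hx.1 hx.2).1
end
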